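/- arXiv:0905.2778 — 9 statements merged into one kernel-verified Lean document; each statement's English description precedes it below -/
import Mathlib

section
/- Let X be a compact metric space and φ : X → X a CSLI map. Then for every natural number N, the set {u ∈ X : |φ⁻¹({u})| ≤ N} is open in X, where |·| denotes cardinality. -/
/-- A map is locally injective if every point has a neighborhood on which
the map is injective. -/
def LocallyInjective {X : Type*} [TopologicalSpace X] (φ : X → X) : Prop :=
  ∀ x : X, ∃ U ∈ nhds x, Set.InjOn φ U

/-- A map of a topological space to itself is CSLI if it is continuous,
surjective and locally injective. -/
def CSLI {X : Type*} [TopologicalSpace X] (φ : X → X) : Prop :=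
  Continuous φ ∧ Function.Surjective φ ∧ LocallyInjective φ

/-- For a CSLI map `φ` of a compact metric space, the set of points whose fiber
has at most `N` elements is open. -/
theorem isOpen_card_fiber_le {X : Type*} [MetricSpace X] [CompactSpace X]
    (φ : X → X) (hφ : CSLI φ) (N : ℕ) :
    IsOpen {u : X | (φ ⁻¹' {u}).ncard ≤ N} := by
  obtain ⟨hc, -, hli⟩ := hφ
  -- choose open injectivity neighborhoods
  have hU : ∀ x : X, ∃ V : Set X, IsOpen V ∧ x ∈ V ∧ Set.InjOn φ V := by
    intro x
    obtain ⟨U, hUn, hUi⟩ := hli x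
    obtain ⟨V, hVU, hVo, hxV⟩ := mem_nhds_iff.mp hUn
    exact ⟨V, hVo, hxV, hUi.mono hVU⟩
  choose U hUo hUm hUi using hU
  -- a fiber meets each injectivity neighborhood in at most one point
  have hsub : ∀ (v x : X), (φ ⁻¹' {v} ∩ U x).Subsingleton := by
    intro v x y₁ hy₁ y₂ hy₂
    exact hUi x hy₁.2 hy₂.2 (hy₁.1.trans hy₂.1.symm)
  -- every fiber is finite
  have hfin : ∀ v : X, (φ ⁻¹' {v}).Finite := by
    intro v
    have hK : IsCompact (φ ⁻¹' {v}) :=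
      (isClosed_singleton.preimage hc).isCompact
    obtain ⟨T, hT, hTfin, hcov⟩ := hK.elim_finite_subcover_image
      (fun x _ => hUo x) (fun y hy => Set.mem_biUnion hy (hUm y))
    have heq : φ ⁻¹' {v} = ⋃ x ∈ T, (φ ⁻¹' {v} ∩ U x) := by
      ext y
      constructor
      · intro hy
        obtain ⟨x, hxT, hyx⟩ := Set.mem_iUnion₂.mp (hcov hy)
        exact Set.mem_iUnion₂.mpr ⟨x, hxT, hy, hyx⟩
      · intro h
        obtain ⟨x, -, hy, -⟩ := Set.mem_iUnion₂.mp h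
        exact hy
    rw [heq]
    exact hTfin.biUnion fun x _ => (hsub v x).finite
  rw [isOpen_iff_forall_mem_open]
  intro u hu
  have hFfin := hfin u
  set W : Set X := ⋃ x ∈ φ ⁻¹' {u}, U x with hW
  have hWo : IsOpen W := isOpen_biUnion fun x _ => hUo x
  have hKc : IsCompact (φ '' Wᶜ) := (hWo.isClosed_compl.isCompact).image hc
  refine ⟨(φ '' Wᶜ)ᶜ, ?_, hKc.isClosed.isOpen_compl, ?_⟩
  · intro v hv
    have hvW : φ ⁻¹' {v} ⊆ W := by
      intro y hy
      by_contra hyW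
      exact hv ⟨y, hyW, hy.out⟩
    have hg : ∀ y ∈ φ ⁻¹' {v}, ∃ x ∈ φ ⁻¹' {u}, y ∈ U x := by
      intro y hy
      simpa [hW] using hvW hy
    choose g hgF hgU using hg
    classical
    set g' : X → X := fun y => if h : y ∈ φ ⁻¹' {v} then g y h else y with hg'
    have hmaps : ∀ y ∈ φ ⁻¹' {v}, g' y ∈ φ ⁻¹' {u} := by
      intro y hy; simp only [hg', dif_pos hy]; exact hgF y hy
    have hinj : Set.InjOn g' (φ ⁻¹' {v}) := by
      intro y₁ hy₁ y₂ hy₂ h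
      simp only [hg', dif_pos hy₁, dif_pos hy₂] at h
      exact hsub v (g y₂ hy₂) ⟨hy₁, h ▸ hgU y₁ hy₁⟩ ⟨hy₂, hgU y₂ hy₂⟩
    calc (φ ⁻¹' {v}).ncard ≤ (φ ⁻¹' {u}).ncard :=
          Set.ncard_le_ncard_of_injOn g' hmaps hinj hFfin
      _ ≤ N := hu
  · intro hmem
    obtain ⟨y, hyW, hy⟩ := hmem
    exact hyW (Set.mem_biUnion (show y ∈ φ ⁻¹' {u} from hy) (hUm y))
end

section
/- Let X be a compact metric space, φ : X → X a CSLI map, and for each j ∈ ℕ set X_j = {y ∈ X : |φ⁻¹({y})| = j}. Then φ is a local homeomorphism if and only if each X_j is both closed and open in X. -/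
open Set Topology

section Aux

variable {X : Type*} [MetricSpace X] [CompactSpace X] {φ : X → X}

/-- Fibers of a continuous locally injective map on a compact space are finite. -/
lemma CSLI.fiber_finite (hc : Continuous φ) (hli : LocallyInjective φ) (y : X) :
    (φ ⁻¹' {y}).Finite := by
  have hcomp : IsCompact (φ ⁻¹' {y}) := (isClosed_singleton.preimage hc).isCompact
  choose U hU hinj using hli
  obtain ⟨t, htF, hcov⟩ := hcomp.elim_nhds_subcover U (fun x _ => hU x)
  refine (t.finite_toSet).subset fun z hz => ?_
  obtain ⟨x, hx, hzx⟩ := Set.mem_iUnion₂.1 (hcov hz)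
  have hxF : x ∈ φ ⁻¹' {y} := htF x hx
  have : z = x := (hinj x) hzx (mem_of_mem_nhds (hU x)) (by
    simp only [Set.mem_preimage, Set.mem_singleton_iff] at hz hxF
    rw [hz, hxF])
  simpa [this] using hx

/-- Around a finite set, one can find pairwise disjoint open neighborhoods,
each contained in a prescribed neighborhood. -/
lemma exists_disjoint_opens {F : Set X} (hF : F.Finite) (N : X → Set X)
    (hNo : ∀ x ∈ F, IsOpen (N x)) (hNx : ∀ x ∈ F, x ∈ N x) :
    ∃ U : X → Set X, (∀ x ∈ F, IsOpen (U x)) ∧ (∀ x ∈ F, x ∈ U x) ∧ (∀ x ∈ F, U x ⊆ N x) ∧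
      (F.Pairwise fun x x' => Disjoint (U x) (U x')) := by
  obtain ⟨m, hm0, hm⟩ : ∃ m : ℝ, 0 < m ∧ ∀ x ∈ F, ∀ x' ∈ F, x ≠ x' → m ≤ dist x x' := by
    set P : Set (X × X) := {p | p.1 ∈ F ∧ p.2 ∈ F ∧ p.1 ≠ p.2} with hP
    have hPfin : P.Finite := (hF.prod hF).subset fun p hp => ⟨hp.1, hp.2.1⟩
    rcases P.eq_empty_or_nonempty with hPe | hPne
    · exact ⟨1, one_pos, fun x hx x' hx' hne => absurd (Set.eq_empty_iff_forall_notMem.1 hPe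
        (x, x')) (by simp [hP, hx, hx', hne])⟩
    · obtain ⟨p, hpP, hpmin⟩ := Set.exists_min_image P (fun p => dist p.1 p.2) hPfin hPne
      exact ⟨dist p.1 p.2, dist_pos.2 hpP.2.2,
        fun x hx x' hx' hne => hpmin (x, x') ⟨hx, hx', hne⟩⟩
  refine ⟨fun x => Metric.ball x (m / 2) ∩ N x, fun x hx => Metric.isOpen_ball.inter (hNo x hx),
    fun x hx => ⟨Metric.mem_ball_self (by linarith), hNx x hx⟩,
    fun x _ => Set.inter_subset_right, fun x hx x' hx' hne => ?_⟩
  refine Disjoint.mono Set.inter_subset_left Set.inter_subset_left ?_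
  exact Metric.ball_disjoint_ball (by linarith [hm x hx x' hx' hne])

/-- Tube lemma: if opens cover the fiber of `y`, there is an open `V ∋ y` whose
preimage is contained in the union of those opens. -/
lemma exists_tube (hc : Continuous φ) {y : X} (U : X → Set X)
    (hUo : ∀ x ∈ φ ⁻¹' {y}, IsOpen (U x)) (hUx : ∀ x ∈ φ ⁻¹' {y}, x ∈ U x) :
    ∃ V : Set X, IsOpen V ∧ y ∈ V ∧ φ ⁻¹' V ⊆ ⋃ x ∈ φ ⁻¹' {y}, U x := by
  set W := ⋃ x ∈ φ ⁻¹' {y}, U x with hW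
  have hWo : IsOpen W := isOpen_biUnion hUo
  have hcl : IsClosed (φ '' Wᶜ) := (hWo.isClosed_compl.isCompact.image hc).isClosed
  refine ⟨(φ '' Wᶜ)ᶜ, hcl.isOpen_compl, ?_, ?_⟩
  · rintro ⟨z, hz, hzy⟩
    exact hz (Set.mem_biUnion (show z ∈ φ ⁻¹' {y} by simp [hzy]) (hUx z (by simp [hzy])))
  · intro z hz
    by_contra hzW
    exact hz ⟨z, hzW, rfl⟩

/-- Counting lemma: if the fiber of `y'` is covered by pairwise disjoint sets on each of
which `φ` is injective, indexed by a finite set `F`, then the fiber has at most `F.ncard`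
elements, with equality forcing a preimage in each of the sets. -/
lemma count_le {F : Set X} (hF : F.Finite) {U : X → Set X}
    (hinj : ∀ x ∈ F, Set.InjOn φ (U x))
    (hdisj : F.Pairwise fun x x' => Disjoint (U x) (U x'))
    {y' : X} (hsub : φ ⁻¹' {y'} ⊆ ⋃ x ∈ F, U x) :
    (φ ⁻¹' {y'}).ncard ≤ F.ncard ∧
      ((φ ⁻¹' {y'}).ncard = F.ncard → ∀ x ∈ F, ∃ z ∈ U x, φ z = y') := by
  classical
  have hex : ∀ z ∈ φ ⁻¹' {y'}, ∃ x ∈ F, z ∈ U x := fun z hz => by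
    simpa using Set.mem_iUnion₂.1 (hsub hz)
  choose g hgF hgU using hex
  have hval : ∀ z ∈ φ ⁻¹' {y'}, φ z = y' := fun z hz => hz
  have hinj' : ∀ a₁ ∈ φ ⁻¹' {y'}, ∀ a₂ ∈ φ ⁻¹' {y'},
      ∀ (h₁ : a₁ ∈ φ ⁻¹' {y'}) (h₂ : a₂ ∈ φ ⁻¹' {y'}), g a₁ h₁ = g a₂ h₂ → a₁ = a₂ := by
    intro a₁ ha₁ a₂ ha₂ h₁ h₂ hg
    refine hinj _ (hgF a₁ h₁) (hgU a₁ h₁) ?_ ?_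
    · rw [hg]; exact hgU a₂ h₂
    · rw [hval a₁ ha₁, hval a₂ ha₂]
  constructor
  · let f : X → X := fun z => if h : z ∈ φ ⁻¹' {y'} then g z h else z
    have hfeq : ∀ z (hz : z ∈ φ ⁻¹' {y'}), f z = g z hz := fun z hz => dif_pos hz
    refine Set.ncard_le_ncard_of_injOn f (fun a ha => ?_) (fun a ha b hb hab => ?_) hF
    · rw [hfeq a ha]; exact hgF a ha
    · rw [hfeq a ha, hfeq b hb] at hab
      exact hinj' a ha b hb ha hb hab
  · intro hcard x hx
    have := Set.surj_on_of_inj_on_of_ncard_le (s := φ ⁻¹' {y'}) (t := F)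
      (fun a ha => g a ha) (fun a ha => hgF a ha)
      (fun a₁ a₂ ha₁ ha₂ h => hinj' a₁ ha₁ a₂ ha₂ ha₁ ha₂ h) (le_of_eq hcard.symm) hF
    obtain ⟨z, hz, hzx⟩ := this x hx
    exact ⟨z, hzx ▸ hgU z hz, hval z hz⟩

/-- For a local homeomorphism that is continuous and locally injective on a compact
metric space, the fiber cardinality is locally constant. -/
lemma locally_const_card (h : IsLocalHomeomorph φ) (hc : Continuous φ)
    (hli : LocallyInjective φ) (y : X) :
    ∃ V : Set X, IsOpen V ∧ y ∈ V ∧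
      ∀ y' ∈ V, (φ ⁻¹' {y'}).ncard = (φ ⁻¹' {y}).ncard := by
  have hF : (φ ⁻¹' {y}).Finite := CSLI.fiber_finite hc hli y
  -- good neighborhoods from the local homeomorphism property
  have hgood : ∀ x : X, ∃ s : Set X, IsOpen s ∧ x ∈ s ∧ Set.InjOn φ s ∧
      ∀ t ⊆ s, IsOpen t → IsOpen (φ '' t) := by
    intro x
    obtain ⟨e, hxe, hfe⟩ := h x
    refine ⟨e.source, e.open_source, hxe, fun a ha b hb hab => ?_, fun t hts hto => ?_⟩
    · exact e.injOn ha hb (by rw [← hfe]; exact hab)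
    · rw [hfe]
      exact e.isOpen_image_of_subset_source hto hts
  choose N hNo hNx hNinj hNmap using hgood
  obtain ⟨U, hUo, hUx, hUN, hUd⟩ := exists_disjoint_opens hF N
    (fun x _ => hNo x) (fun x _ => hNx x)
  obtain ⟨V, hVo, hyV, hVsub⟩ := exists_tube hc U (fun x hx => hUo x hx) (fun x hx => hUx x hx)
  set V' := V ∩ ⋂ x ∈ φ ⁻¹' {y}, φ '' U x with hV'
  have hV'o : IsOpen V' := hVo.inter (hF.isOpen_biInter
    (fun x hx => hNmap x _ (hUN x hx) (hUo x hx)))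
  have hyV' : y ∈ V' := ⟨hyV, Set.mem_biInter fun x hx =>
    ⟨x, hUx x hx, by simpa using hx⟩⟩
  refine ⟨V', hV'o, hyV', fun y' hy' => le_antisymm ?_ ?_⟩
  · -- upper bound
    have hsub : φ ⁻¹' {y'} ⊆ ⋃ x ∈ φ ⁻¹' {y}, U x := fun z hz => by
      have : z ∈ φ ⁻¹' V := by
        simp only [Set.mem_preimage, Set.mem_singleton_iff] at hz
        simp [hz, hy'.1]
      exact hVsub this
    exact (count_le hF (fun x hx => (hNinj x).mono (hUN x hx)) hUd hsub).1
  · -- lower bound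
    have hex : ∀ x ∈ φ ⁻¹' {y}, ∃ z, z ∈ U x ∧ φ z = y' := by
      intro x hx
      obtain ⟨z, hzU, hzφ⟩ := Set.mem_iInter₂.1 hy'.2 x hx
      exact ⟨z, hzU, hzφ⟩
    choose z hzU hzφ using hex
    classical
    let f : X → X := fun x => if hx : x ∈ φ ⁻¹' {y} then z x hx else x
    have hfeq : ∀ a (ha : a ∈ φ ⁻¹' {y}), f a = z a ha := fun a ha => dif_pos ha
    refine Set.ncard_le_ncard_of_injOn f (fun a ha => ?_) (fun a ha b hb hab => ?_)
      (CSLI.fiber_finite hc hli y')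
    · rw [hfeq a ha]
      simpa using hzφ a ha
    · rw [hfeq a ha, hfeq b hb] at hab
      by_contra hne
      have hd := hUd ha hb hne
      exact (Set.disjoint_left.1 hd (hzU a ha)) (hab ▸ hzU b hb)

/-- If fiber-cardinality sets are clopen, `φ` is an open map. -/
lemma isOpenMap_of_clopen (hc : Continuous φ) (hli : LocallyInjective φ)
    (hcl : ∀ j : ℕ, IsClopen {y : X | (φ ⁻¹' {y}).ncard = j}) : IsOpenMap φ := by
  classical
  intro O hO
  rw [isOpen_iff_forall_mem_open]
  rintro y' ⟨x, hxO, rfl⟩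
  set F := φ ⁻¹' {φ x} with hFdef
  have hF : F.Finite := CSLI.fiber_finite hc hli (φ x)
  set k := F.ncard with hk
  -- injectivity neighborhoods
  have hs : ∀ x'' : X, ∃ s : Set X, IsOpen s ∧ x'' ∈ s ∧ Set.InjOn φ s := by
    intro x''
    obtain ⟨W, hW, hWinj⟩ := hli x''
    exact ⟨interior W, isOpen_interior, mem_interior_iff_mem_nhds.2 hW,
      hWinj.mono interior_subset⟩
  choose s hso hsx hsinj using hs
  set N : X → Set X := fun x'' => if x'' = x then s x'' ∩ O else s x'' with hN
  have hNo : ∀ x'' ∈ F, IsOpen (N x'') := by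
    intro x'' _
    by_cases hcase : x'' = x <;> simp only [hN, hcase, if_true, if_false]
    · simpa using (hso x).inter hO
    · simpa [hcase] using hso x''
  have hNx : ∀ x'' ∈ F, x'' ∈ N x'' := by
    intro x'' _
    by_cases hcase : x'' = x <;> simp only [hN, hcase, if_true, if_false]
    · subst hcase; exact ⟨hsx x'', hxO⟩
    · simpa [hcase] using hsx x''
  have hNinj : ∀ x'' ∈ F, Set.InjOn φ (N x'') := by
    intro x'' _
    by_cases hcase : x'' = x <;> simp only [hN, hcase, if_true, if_false]
    · exact (hsinj x).mono (by simpa using Set.inter_subset_left)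
    · simpa [hcase] using hsinj x''
  obtain ⟨U, hUo, hUx, hUN, hUd⟩ := exists_disjoint_opens hF N hNo hNx
  obtain ⟨V, hVo, hyV, hVsub⟩ := exists_tube hc U (fun a ha => hUo a ha) (fun a ha => hUx a ha)
  set V' := V ∩ {y : X | (φ ⁻¹' {y}).ncard = k} with hV'
  have hV'o : IsOpen V' := hVo.inter (hcl k).2
  have hyV' : φ x ∈ V' := ⟨hyV, by simp [hk, hFdef]⟩
  refine ⟨V', fun w hw => ?_, hV'o, hyV'⟩
  have hsub : φ ⁻¹' {w} ⊆ ⋃ a ∈ F, U a := fun z hz => by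
    have : z ∈ φ ⁻¹' V := by
      simp only [Set.mem_preimage, Set.mem_singleton_iff] at hz
      simp [hz, hw.1]
    exact hVsub this
  have hwk : (φ ⁻¹' {w}).ncard = F.ncard := hw.2
  have hcount := (count_le hF (fun a ha => (hNinj a ha).mono (hUN a ha)) hUd hsub).2 hwk x
    (by simp [hFdef])
  obtain ⟨z, hzU, hzw⟩ := hcount
  have hzO : z ∈ O := by
    have hzN := hUN x (show x ∈ F by simp [hFdef]) hzU
    simp only [hN, if_pos rfl] at hzN
    exact hzN.2
  exact ⟨z, hzO, hzw⟩

end Aux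

/-- A CSLI map `φ` of a compact metric space is a local homeomorphism if and only
if for each `j` the set `X_j` of points whose fiber has exactly `j` elements is
both closed and open. -/
theorem isLocalHomeomorph_iff_isClopen_card_fiber {X : Type*} [MetricSpace X]
    [CompactSpace X] (φ : X → X) (hφ : CSLI φ) :
    IsLocalHomeomorph φ ↔ ∀ j : ℕ, IsClopen {y : X | (φ ⁻¹' {y}).ncard = j} := by
  obtain ⟨hc, hsurj, hli⟩ := hφ
  constructor
  · intro h j
    constructor
    · -- closed: complement is open
      rw [← isOpen_compl_iff]
      rw [isOpen_iff_forall_mem_open]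
      intro y hy
      obtain ⟨V, hVo, hyV, hVconst⟩ := locally_const_card h hc hli y
      refine ⟨V, fun y' hy' => ?_, hVo, hyV⟩
      simp only [Set.mem_compl_iff, Set.mem_setOf_eq] at hy ⊢
      rw [hVconst y' hy']
      exact hy
    · rw [isOpen_iff_forall_mem_open]
      intro y hy
      obtain ⟨V, hVo, hyV, hVconst⟩ := locally_const_card h hc hli y
      refine ⟨V, fun y' hy' => ?_, hVo, hyV⟩
      simp only [Set.mem_setOf_eq] at hy ⊢
      rw [hVconst y' hy']
      exact hy
  · intro hcl
    have hopen : IsOpenMap φ := isOpenMap_of_clopen hc hli hcl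
    rw [isLocalHomeomorph_iff_isOpenEmbedding_restrict]
    intro x
    obtain ⟨U, hU, hUinj⟩ := hli x
    refine ⟨interior U, interior_mem_nhds.2 hU, ?_⟩
    exact IsOpenEmbedding.of_continuous_injective_isOpenMap
      (hc.comp continuous_subtype_val)
      (fun a b hab => Subtype.ext (hUinj (interior_subset a.2) (interior_subset b.2) hab))
      (hopen.restrict isOpen_interior)
end

section
/- Let X be a compact metric space and φ : X → X a CSLI map. If there exists a cocycle ω for φ, then for every y ∈ X there exists a point x ∈ φ⁻¹({y}) such that φ is locally open at x. -/
/-- A cocycle for a map `φ : X → X` is a continuous nonnegative real function `ω`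
such that the sum of `ω` over each fiber of `φ` equals `1`. -/
def IsCocycle {X : Type*} [TopologicalSpace X] (φ : X → X) (ω : X → ℝ) : Prop :=
  Continuous ω ∧ (∀ x : X, 0 ≤ ω x) ∧ ∀ y : X, ∑ᶠ x ∈ φ ⁻¹' {y}, ω x = 1

/-- `φ` is locally open at `x` if there is an open neighborhood `N` of `x` such that
the restriction of `φ` to `N` is an open map of `N` into `X`. -/
def LocallyOpenAt {X : Type*} [TopologicalSpace X] (φ : X → X) (x : X) : Prop :=
  ∃ N : Set X, IsOpen N ∧ x ∈ N ∧ ∀ O ⊆ N, IsOpen O → IsOpen (φ '' O)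

/-- Fibers of a continuous locally injective map on a compact space are finite. -/
lemma fiber_finite_aux {X : Type*} [TopologicalSpace X] [T1Space X] [CompactSpace X] {φ : X → X}
    (hc : Continuous φ) (hinj : LocallyInjective φ) (y : X) :
    (φ ⁻¹' {y}).Finite := by
  have hK : IsCompact (φ ⁻¹' {y}) :=
    (IsClosed.preimage hc isClosed_singleton).isCompact
  choose U hU hUinj using hinj
  obtain ⟨t, hts, hcover⟩ := hK.elim_nhds_subcover U (fun x _ => hU x)
  apply Set.Finite.subset t.finite_toSet
  intro v hv
  have hv' := hcover hv
  simp only [Set.mem_iUnion, exists_prop] at hv'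
  obtain ⟨x, hxt, hvU⟩ := hv'
  have hxf : φ x = y := hts x hxt
  have hvf : φ v = y := hv
  have : v = x := hUinj x hvU (mem_of_mem_nhds (hU x)) (by rw [hvf, hxf])
  simpa [this] using hxt

/-- If a CSLI system admits a cocycle, then every point has a preimage at which
the map is locally open. -/
theorem exists_locallyOpenAt_of_cocycle {X : Type*} [MetricSpace X] [CompactSpace X]
    (φ : X → X) (hφ : CSLI φ) (ω : X → ℝ) (hω : IsCocycle φ ω) :
    ∀ y : X, ∃ x ∈ φ ⁻¹' {y}, LocallyOpenAt φ x := by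
  classical
  obtain ⟨hc, hsurj, hinj⟩ := hφ
  obtain ⟨hωc, hωnn, hωsum⟩ := hω
  have hfin : ∀ y : X, (φ ⁻¹' {y}).Finite := fun y => fiber_finite_aux hc hinj y
  have hsum : ∀ y : X, ∑ u ∈ (hfin y).toFinset, ω u = 1 := by
    intro y
    rw [← hωsum y, ← finsum_mem_coe_finset, (hfin y).coe_toFinset]
  intro y
  -- find a fiber point with positive weight
  have hpos : ∃ x ∈ (hfin y).toFinset, 0 < ω x := by
    by_contra h
    push_neg at h
    have : ∑ u ∈ (hfin y).toFinset, ω u ≤ 0 := Finset.sum_nonpos h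
    linarith [hsum y]
  obtain ⟨x, hxF, hxpos⟩ := hpos
  rw [Set.Finite.mem_toFinset] at hxF
  choose U hU hUinj using hinj
  set N : Set X := interior (U x) ∩ ω ⁻¹' Set.Ioi (ω x / 2) with hNdef
  have hNopen : IsOpen N := isOpen_interior.inter (isOpen_Ioi.preimage hωc)
  have hxN : x ∈ N :=
    ⟨mem_interior_iff_mem_nhds.2 (hU x), by simp only [Set.mem_preimage, Set.mem_Ioi]; linarith⟩
  refine ⟨x, hxF, N, hNopen, hxN, ?_⟩
  intro O hON hO
  rw [isOpen_iff_mem_nhds]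
  rintro _ ⟨x', hx'O, rfl⟩
  by_contra hmem
  have hx'N : x' ∈ N := hON hx'O
  have hωx' : ω x / 2 < ω x' := hx'N.2
  have hωx'pos : 0 < ω x' := by linarith
  set F' := (hfin (φ x')).toFinset with hF'def
  have hx'F' : x' ∈ F' := by simp [hF'def, Set.Finite.mem_toFinset]
  set n := F'.card with hndef
  have hn : 1 ≤ n := Finset.card_pos.2 ⟨x', hx'F'⟩
  have hn0 : (0:ℝ) < (n:ℝ) := by exact_mod_cast hn
  set ε := ω x' / (2 * (n:ℝ)) with hεdef
  have hεpos : 0 < ε := by positivity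
  -- neighborhoods around fiber points
  set V : X → Set X := fun z =>
    (interior (U z) ∩ ω ⁻¹' Set.Iio (ω z + ε)) ∩ (if z = x' then O else Set.univ) with hVdef
  have hVopen : ∀ z, IsOpen (V z) := by
    intro z
    refine (isOpen_interior.inter (isOpen_Iio.preimage hωc)).inter ?_
    split
    · exact hO
    · exact isOpen_univ
  have hVsubU : ∀ z, V z ⊆ U z := fun z u hu => interior_subset hu.1.1
  have hVinj : ∀ z, Set.InjOn φ (V z) := fun z => (hUinj z).mono (hVsubU z)
  have hVω : ∀ z u, u ∈ V z → ω u < ω z + ε := fun z u hu => hu.1.2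
  have hVx'O : V x' ⊆ O := by
    intro u hu
    have := hu.2
    rwa [if_pos rfl] at this
  have hzV : ∀ z, φ z = φ x' → z ∈ V z := by
    intro z hz
    refine ⟨⟨mem_interior_iff_mem_nhds.2 (hU z), by simp only [Set.mem_preimage, Set.mem_Iio]; linarith⟩, ?_⟩
    split_ifs with h
    · subst h; exact hx'O
    · trivial
  -- compactness: preimages of points near φ x' lie in ⋃ V z
  set K := (⋃ z ∈ F', V z)ᶜ with hKdef
  have hKcomp : IsCompact K :=
    ((isOpen_biUnion (fun z _ => hVopen z)).isClosed_compl).isCompact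
  have hφxK : φ x' ∉ φ '' K := by
    rintro ⟨u, huK, hu⟩
    apply huK
    refine Set.mem_iUnion₂.2 ⟨u, ?_, hzV u hu⟩
    rw [hF'def, Set.Finite.mem_toFinset]
    exact hu
  set W := (φ '' K)ᶜ with hWdef
  have hWnhds : W ∈ nhds (φ x') :=
    ((hKcomp.image hc).isClosed.isOpen_compl).mem_nhds hφxK
  have hWnsub : ¬ W ⊆ φ '' O := fun h => hmem (Filter.mem_of_superset hWnhds h)
  obtain ⟨y'', hy''W, hy''O⟩ := Set.not_subset.1 hWnsub
  set S := (hfin y'').toFinset with hSdef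
  have hSfib : ∀ u ∈ S, φ u = y'' := by
    intro u hu
    simpa [hSdef, Set.Finite.mem_toFinset] using hu
  have hSV : ∀ u : X, ∃ z : X, u ∈ S → z ∈ F' ∧ u ∈ V z := by
    intro u
    by_cases hu : u ∈ S
    · have huK : u ∉ K := fun hK' => hy''W ⟨u, hK', hSfib u hu⟩
      have : u ∈ ⋃ z ∈ F', V z := by
        by_contra h; exact huK h
      simp only [Set.mem_iUnion, exists_prop] at this
      obtain ⟨z, hz1, hz2⟩ := this
      exact ⟨z, fun _ => ⟨hz1, hz2⟩⟩
    · exact ⟨x', fun h => absurd h hu⟩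
  choose i hi using hSV
  have hine : ∀ u ∈ S, i u ≠ x' := by
    intro u hu h
    exact hy''O ⟨u, hVx'O (h ▸ (hi u hu).2), hSfib u hu⟩
  have hiinj : ∀ u ∈ S, ∀ v ∈ S, i u = i v → u = v := by
    intro u hu v hv huv
    exact hVinj (i u) (hi u hu).2 (huv ▸ (hi v hv).2)
      (by rw [hSfib u hu, hSfib v hv])
  have h1 : (1:ℝ) = ∑ u ∈ S, ω u := (hsum y'').symm
  have h2 : ∑ u ∈ S, ω u ≤ ∑ u ∈ S, (ω (i u) + ε) :=
    Finset.sum_le_sum (fun u hu => le_of_lt (hVω (i u) u (hi u hu).2))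
  have h3 : ∑ u ∈ S, (ω (i u) + ε) = ∑ z ∈ S.image i, (ω z + ε) :=
    by rw [Finset.sum_image hiinj]
  have himage : S.image i ⊆ F'.erase x' := by
    intro z hz
    simp only [Finset.mem_image] at hz
    obtain ⟨u, hu, rfl⟩ := hz
    exact Finset.mem_erase.2 ⟨hine u hu, (hi u hu).1⟩
  have h4 : ∑ z ∈ S.image i, (ω z + ε) ≤ ∑ z ∈ F'.erase x', (ω z + ε) :=
    Finset.sum_le_sum_of_subset_of_nonneg himage
      (fun z _ _ => by linarith [hωnn z])
  have h5 : ∑ z ∈ F'.erase x', (ω z + ε) = (∑ z ∈ F', (ω z + ε)) - (ω x' + ε) :=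
    Finset.sum_erase_eq_sub hx'F'
  have h6 : ∑ z ∈ F', (ω z + ε) = 1 + (n:ℝ) * ε := by
    rw [Finset.sum_add_distrib, hsum (φ x'), Finset.sum_const, nsmul_eq_mul, hndef]
  have h7 : (n:ℝ) * ε = ω x' / 2 := by
    rw [hεdef]
    field_simp
  linarith
end

section
/- Let X be a zero-dimensional compact metric space (i.e., X admits a basis of clopen sets) and φ : X → X a CSLI map. If for every y ∈ X there exists a point x ∈ φ⁻¹({y}) such that φ is locally open at x, then there exists a cocycle for φ. -/
/-- Disjointification lemma: given a finite list of clopen sets on which `φ` is injective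
and with clopen images, there is a single clopen set on which `φ` is injective whose
image is the union of the images. -/
lemma exists_clopen_inj_union {X : Type*} [TopologicalSpace X] (φ : X → X)
    (hc : Continuous φ) (L : List (Set X))
    (h : ∀ s ∈ L, IsClopen s ∧ Set.InjOn φ s ∧ IsClopen (φ '' s)) :
    ∃ V : Set X, IsClopen V ∧ Set.InjOn φ V ∧ IsClopen (φ '' V) ∧
      φ '' V = ⋃ s ∈ L, φ '' s := by
  induction L with
  | nil => exact ⟨∅, isClopen_empty, by simp [Set.InjOn], by simpa using isClopen_empty, by simp⟩
  | cons s L' ih =>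
    obtain ⟨V', hV'c, hV'inj, hV'img, hV'eq⟩ :=
      ih (fun t ht => h t (List.mem_cons_of_mem _ ht))
    obtain ⟨hsc, hsinj, hsimg⟩ := h s List.mem_cons_self
    set D : Set X := φ '' s \ φ '' V' with hD
    have hDc : IsClopen D := hsimg.diff hV'img
    set W : Set X := s ∩ φ ⁻¹' D with hW
    have hWimg : φ '' W = D := by
      apply Set.Subset.antisymm
      · rintro _ ⟨x, ⟨hxs, hxD⟩, rfl⟩
        exact hxD
      · rintro y hy
        obtain ⟨x, hxs, rfl⟩ := hy.1
        exact ⟨x, ⟨hxs, hy⟩, rfl⟩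
    refine ⟨V' ∪ W, hV'c.union (hsc.inter (hDc.preimage hc)), ?_, ?_, ?_⟩
    · rintro a (ha | ha) b (hb | hb) hab
      · exact hV'inj ha hb hab
      · exact absurd ⟨a, ha, hab⟩ hb.2.2
      · exact absurd ⟨b, hb, hab.symm⟩ ha.2.2
      · exact hsinj ha.1 hb.1 hab
    · rw [Set.image_union, hWimg, hD, Set.union_diff_self]
      exact hV'img.union hsimg
    · rw [Set.image_union, hWimg, hD, Set.union_diff_self, hV'eq]
      simp [Set.union_comm]

/-- For a CSLI map of a zero-dimensional compact metric space (one admitting a basis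
of clopen sets), if every point has a preimage at which the map is locally open,
then a cocycle exists. -/
theorem exists_cocycle_of_zero_dimensional {X : Type*} [MetricSpace X] [CompactSpace X]
    (φ : X → X) (hφ : CSLI φ)
    (hzd : ∃ B : Set (Set X), (∀ s ∈ B, IsClopen s) ∧ TopologicalSpace.IsTopologicalBasis B)
    (hlo : ∀ y : X, ∃ x ∈ φ ⁻¹' {y}, LocallyOpenAt φ x) :
    ∃ ω : X → ℝ, IsCocycle φ ω := by
  classical
  obtain ⟨hc, hsurj, hli⟩ := hφ
  obtain ⟨B, hBclopen, hBbasis⟩ := hzd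
  -- Step 1: each point is in the image of a clopen set on which φ is injective,
  -- with clopen image.
  have hU : ∀ y : X, ∃ U : Set X,
      IsClopen U ∧ Set.InjOn φ U ∧ IsClopen (φ '' U) ∧ y ∈ φ '' U := by
    intro y
    obtain ⟨x, hx, N, hNopen, hxN, hNmap⟩ := hlo y
    obtain ⟨S, hS, hSinj⟩ := hli x
    obtain ⟨O, hOS, hOopen, hxO⟩ := mem_nhds_iff.mp hS
    obtain ⟨s, hsB, hxs, hsNO⟩ :=
      hBbasis.exists_subset_of_mem_open (⟨hxN, hxO⟩ : x ∈ N ∩ O) (hNopen.inter hOopen)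
    have hsc := hBclopen s hsB
    have hsimg_open : IsOpen (φ '' s) :=
      hNmap s (hsNO.trans Set.inter_subset_left) hsc.isOpen
    have hsimg_closed : IsClosed (φ '' s) :=
      ((hsc.isClosed.isCompact).image hc).isClosed
    exact ⟨s, hsc, hSinj.mono ((hsNO.trans Set.inter_subset_right).trans hOS),
      ⟨hsimg_closed, hsimg_open⟩, ⟨x, hxs, hx⟩⟩
  choose U hUc hUinj hUimg hUmem using hU
  -- Step 2: finite subcover of X by the images.
  have hcover : (Set.univ : Set X) ⊆ ⋃ y : X, φ '' U y := fun z _ =>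
    Set.mem_iUnion.mpr ⟨z, hUmem z⟩
  obtain ⟨t, ht⟩ := isCompact_univ.elim_finite_subcover (fun y => φ '' U y)
    (fun y => (hUimg y).isOpen) hcover
  -- Step 3: disjointify.
  obtain ⟨V, hVc, hVinj, hVimgc, hVimg⟩ := exists_clopen_inj_union φ hc
    (t.toList.map U) (by
      intro s hs
      obtain ⟨y, _, rfl⟩ := List.mem_map.mp hs
      exact ⟨hUc y, hUinj y, hUimg y⟩)
  have hVuniv : φ '' V = Set.univ := by
    apply Set.eq_univ_of_univ_subset
    intro z hz
    obtain ⟨y, hyt, hzy⟩ := Set.mem_iUnion₂.mp (ht hz)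
    rw [hVimg]
    exact Set.mem_biUnion (List.mem_map.mpr ⟨y, Finset.mem_toList.mpr hyt, rfl⟩) hzy
  -- Step 4: the indicator of V is a cocycle.
  set ω : X → ℝ := fun x => if x ∈ V then 1 else 0 with hω
  have hsup : Function.support ω = V := by
    ext x
    simp only [Function.mem_support, hω]
    by_cases hx : x ∈ V <;> simp [hx]
  refine ⟨ω, ?_, ?_, ?_⟩
  · apply IsLocallyConstant.continuous
    rw [IsLocallyConstant.iff_exists_open]
    intro x
    by_cases hx : x ∈ V
    · exact ⟨V, hVc.isOpen, hx, fun y hy => by simp [hω, hy, hx]⟩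
    · exact ⟨Vᶜ, hVc.compl.isOpen, hx, fun y hy => by
        have hy' : y ∉ V := hy
        simp [hω, hy', hx]⟩
  · intro x
    simp only [hω]
    split <;> norm_num
  · intro y
    obtain ⟨x₀, hx₀V, hx₀⟩ : ∃ x₀ ∈ V, φ x₀ = y := by
      have : y ∈ φ '' V := hVuniv ▸ Set.mem_univ y
      exact this
    have key : φ ⁻¹' {y} ∩ Function.support ω = {x₀} ∩ Function.support ω := by
      rw [hsup]
      ext x
      constructor
      · rintro ⟨hx1, hx2⟩
        have : x = x₀ := hVinj hx2 hx₀V (by simpa using hx1.trans hx₀.symm)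
        exact ⟨this, hx2⟩
      · rintro ⟨rfl, hx2⟩
        exact ⟨by simp [hx₀], hx2⟩
    rw [finsum_mem_inter_support_eq ω _ _ key, finsum_mem_singleton]
    simp [hω, hx₀V]
end

section
/- Let 𝒫 be a divisible abelian semigroup and let d ↦ φ_d be an action of 𝒫 on a compact metric space X by CSLI maps (so φ_{d+e} = φ_d ∘ φ_e for all d, e ∈ 𝒫). Then either φ_d is a homeomorphism for every d ∈ 𝒫, or φ_d is a homeomorphism for no d ∈ 𝒫. -/
/-- `iterAdd n p` is the `(n+1)`-fold sum `p + p + ⋯ + p`, so that every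
`iterAdd n p` is a positive multiple of `p`. -/
def iterAdd {P : Type*} [AddCommSemigroup P] : ℕ → P → P
  | 0, p => p
  | n + 1, p => p + iterAdd n p

/-- A sequence `d` in an abelian semigroup is fundamental if each `d k` is a
multiple of `d (k+1)` by an integer `> 1`, and every element of the semigroup is
a positive multiple of some `d k`. -/
def IsFundamentalSeq {P : Type*} [AddCommSemigroup P] (d : ℕ → P) : Prop :=
  (∃ n : ℕ → ℕ, ∀ k, 1 ≤ n k ∧ d k = iterAdd (n k) (d (k + 1))) ∧
    ∀ p : P, ∃ k m : ℕ, p = iterAdd m (d k)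

/-- An abelian semigroup is divisible if it contains a fundamental sequence. -/
def IsDivisibleSemigroup (P : Type*) [AddCommSemigroup P] : Prop :=
  ∃ d : ℕ → P, IsFundamentalSeq d


lemma iterAdd_add_iterAdd {P : Type*} [AddCommSemigroup P] (a b : ℕ) (p : P) :
    iterAdd a p + iterAdd b p = iterAdd (a + b + 1) p := by
  induction a with
  | zero => rw [Nat.zero_add]; rfl
  | succ a ih =>
      have h : a + 1 + b + 1 = (a + b + 1) + 1 := by omega
      rw [h]
      show (p + iterAdd a p) + iterAdd b p = p + iterAdd (a + b + 1) p
      rw [add_assoc, ih]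

lemma iterAdd_iterAdd {P : Type*} [AddCommSemigroup P] (m n : ℕ) (p : P) :
    iterAdd m (iterAdd n p) = iterAdd (m * n + m + n) p := by
  induction m with
  | zero => rw [Nat.zero_mul, Nat.zero_add]; rfl
  | succ m ih =>
      show iterAdd n p + iterAdd m (iterAdd n p) = _
      rw [ih, iterAdd_add_iterAdd]
      congr 1
      ring

/-- For an action of a divisible abelian semigroup by CSLI maps on a compact metric
space, either every map of the action is a homeomorphism, or none is. -/
theorem all_or_none_homeomorph {P : Type*} [AddCommSemigroup P]
    (hP : IsDivisibleSemigroup P) {X : Type*} [MetricSpace X] [CompactSpace X]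
    (Φ : P → X → X) (hact : ∀ d e : P, Φ (d + e) = Φ d ∘ Φ e)
    (hφ : ∀ d : P, CSLI (Φ d)) :
    (∀ d : P, ∃ e : X ≃ₜ X, ⇑e = Φ d) ∨ (∀ d : P, ¬ ∃ e : X ≃ₜ X, ⇑e = Φ d) := by
  obtain ⟨d, ⟨n, hn⟩, hdiv⟩ := hP
  -- injectivity of `Φ (iterAdd m p)` is equivalent to injectivity of `Φ p`
  have hA : ∀ (m : ℕ) (p : P),
      Function.Injective (Φ (iterAdd m p)) ↔ Function.Injective (Φ p) := by
    intro m p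
    induction m with
    | zero => exact Iff.rfl
    | succ m ih =>
        have hc : Φ (iterAdd (m + 1) p) = Φ p ∘ Φ (iterAdd m p) := hact p (iterAdd m p)
        rw [hc]
        constructor
        · intro h
          exact ih.mp (Function.Injective.of_comp h)
        · intro h
          exact Function.Injective.comp h (ih.mpr h)
  -- later elements of the fundamental sequence divide earlier ones
  have hB : ∀ k j, k ≤ j → ∃ m, d k = iterAdd m (d j) := by
    intro k j h
    induction j, h using Nat.le_induction with
    | base => exact ⟨0, rfl⟩
    | succ j hj ih =>
        obtain ⟨m, hm⟩ := ih
        refine ⟨m * n j + m + n j, ?_⟩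
        rw [hm, (hn j).2, iterAdd_iterAdd]
  -- if some map is injective, all are
  have hkey : (∃ p, Function.Injective (Φ p)) → ∀ q, Function.Injective (Φ q) := by
    rintro ⟨p, hp⟩ q
    obtain ⟨k, m, hkm⟩ := hdiv p
    obtain ⟨j, m', hjm⟩ := hdiv q
    obtain ⟨a, ha⟩ := hB k (max k j) (le_max_left _ _)
    obtain ⟨b, hb⟩ := hB j (max k j) (le_max_right _ _)
    have hdJ : Function.Injective (Φ (d (max k j))) := by
      have hp' : p = iterAdd (m * a + m + a) (d (max k j)) := by
        rw [hkm, ha, iterAdd_iterAdd]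
      rw [hp'] at hp
      exact (hA _ _).mp hp
    have hq' : q = iterAdd (m' * b + m' + b) (d (max k j)) := by
      rw [hjm, hb, iterAdd_iterAdd]
    rw [hq']
    exact (hA _ _).mpr hdJ
  -- an injective map of the action is a homeomorphism
  have hhom : ∀ q, Function.Injective (Φ q) → ∃ e : X ≃ₜ X, ⇑e = Φ q := by
    intro q hq
    have hbij : Function.Bijective (Φ q) := ⟨hq, (hφ q).2.1⟩
    exact ⟨Continuous.homeoOfEquivCompactToT2 (f := Equiv.ofBijective _ hbij) (hφ q).1, rfl⟩
  by_cases h : ∃ p, Function.Injective (Φ p)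
  · left
    intro q
    exact hhom q (hkey h q)
  · right
    rintro q ⟨e, he⟩
    exact h ⟨q, he ▸ e.injective⟩
end

section
/- Let 𝒫 be a divisible abelian semigroup acting on a compact metric space X by CSLI maps d ↦ φ_d (so φ_{d+e} = φ_d ∘ φ_e), and suppose none of the maps φ_d is a homeomorphism. Then there exists x₀ ∈ X such that |φ_d⁻¹({x₀})| > 1 for all d ∈ 𝒫, and furthermore there exist points u₀ ≠ v₀ in X such that φ_d(u₀) = φ_d(v₀) for all d ∈ 𝒫. -/
section Aux

/-- For a continuous locally injective map, the set of distinct pairs identified by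
the map is closed. -/
lemma isClosed_identified_pairs {X : Type*} [TopologicalSpace X] [T2Space X] {φ : X → X}
    (hc : Continuous φ) (hl : LocallyInjective φ) :
    IsClosed {p : X × X | p.1 ≠ p.2 ∧ φ p.1 = φ p.2} := by
  rw [← isOpen_compl_iff, isOpen_iff_mem_nhds]
  intro p hp
  by_cases hd : p.1 = p.2
  · obtain ⟨U, hU, hinj⟩ := hl p.1
    have hmem : U ×ˢ U ∈ nhds p := by
      rw [nhds_prod_eq]
      exact Filter.prod_mem_prod hU (hd ▸ hU)
    filter_upwards [hmem] with q hq hq'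
    exact hq'.1 (hinj hq.1 hq.2 hq'.2)
  · have hne : φ p.1 ≠ φ p.2 := fun h => hp ⟨hd, h⟩
    have hopen : IsOpen {q : X × X | φ q.1 ≠ φ q.2} := by
      have : {q : X × X | φ q.1 ≠ φ q.2}
          = (fun q : X × X => (φ q.1, φ q.2)) ⁻¹' {r : X × X | r.1 ≠ r.2} := rfl
      rw [this]
      exact (isOpen_ne_fun continuous_fst continuous_snd).preimage
        ((hc.comp continuous_fst).prodMk (hc.comp continuous_snd))
    filter_upwards [hopen.mem_nhds hne] with q hq hq'
    exact hq hq'.2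

lemma not_injective_of_not_homeomorph {X : Type*} [TopologicalSpace X] [CompactSpace X]
    [T2Space X] {φ : X → X} (hc : Continuous φ) (hs : Function.Surjective φ)
    (hnh : ¬ ∃ e : X ≃ₜ X, ⇑e = φ) : ¬ Function.Injective φ := by
  intro hi
  refine hnh ⟨Continuous.homeoOfEquivCompactToT2
    (f := Equiv.ofBijective φ ⟨hi, hs⟩) hc, rfl⟩

end Aux

/-- If a divisible abelian semigroup acts by CSLI maps none of which is a
homeomorphism, then there is a point `x₀` whose fiber under every map of the
action has more than one element, and there are two distinct points identified
by every map of the action. -/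
theorem exists_multifiber_point_of_no_homeomorph {P : Type*} [AddCommSemigroup P]
    (hP : IsDivisibleSemigroup P) {X : Type*} [MetricSpace X] [CompactSpace X]
    (Φ : P → X → X) (hact : ∀ d e : P, Φ (d + e) = Φ d ∘ Φ e)
    (hφ : ∀ d : P, CSLI (Φ d)) (hnh : ∀ d : P, ¬ ∃ e : X ≃ₜ X, ⇑e = Φ d) :
    (∃ x₀ : X, ∀ d : P, (Φ d ⁻¹' {x₀}).Nontrivial) ∧
      ∃ u₀ v₀ : X, u₀ ≠ v₀ ∧ ∀ d : P, Φ d u₀ = Φ d v₀ := by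
  obtain ⟨d, ⟨⟨n, hn⟩, hdiv⟩⟩ := hP
  have hcont : ∀ p : P, Continuous (Φ p) := fun p => (hφ p).1
  have hsurj : ∀ p : P, Function.Surjective (Φ p) := fun p => (hφ p).2.1
  have hli : ∀ p : P, LocallyInjective (Φ p) := fun p => (hφ p).2.2
  have hninj : ∀ p : P, ¬ Function.Injective (Φ p) := fun p =>
    not_injective_of_not_homeomorph (hcont p) (hsurj p) (hnh p)
  -- each `d k` is `d (k+1)` plus something
  have hstep : ∀ k, ∃ e, d k = d (k + 1) + e := by
    intro k
    obtain ⟨h1, h2⟩ := hn k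
    obtain ⟨m, hm⟩ : ∃ m, n k = m + 1 := ⟨n k - 1, (Nat.succ_pred_eq_of_pos h1).symm⟩
    refine ⟨iterAdd m (d (k + 1)), ?_⟩
    rw [h2, hm]
    rfl
  -- every element is `d k` or `d k` plus something
  have hdvd : ∀ p : P, ∃ k, p = d k ∨ ∃ e, p = d k + e := by
    intro p
    obtain ⟨k, m, hm⟩ := hdiv p
    refine ⟨k, ?_⟩
    cases m with
    | zero => exact Or.inl hm
    | succ m => exact Or.inr ⟨iterAdd m (d k), hm⟩
  -- the sets of identified pairs
  set T : ℕ → Set (X × X) :=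
    fun k => {p : X × X | p.1 ≠ p.2 ∧ Φ (d k) p.1 = Φ (d k) p.2} with hTdef
  have hTclosed : ∀ k, IsClosed (T k) := fun k =>
    isClosed_identified_pairs (hcont _) (hli _)
  have hTne : ∀ k, (T k).Nonempty := by
    intro k
    obtain ⟨a, b, hab, hne⟩ := Function.not_injective_iff.mp (hninj (d k))
    exact ⟨(a, b), hne, hab⟩
  have hTanti : ∀ k, T (k + 1) ⊆ T k := by
    intro k p hp
    obtain ⟨e, he⟩ := hstep k
    refine ⟨hp.1, ?_⟩
    rw [he, add_comm, hact]
    simp only [Function.comp_apply]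
    rw [hp.2]
  have hTcompact : ∀ k, IsCompact (T k) := fun k => (hTclosed k).isCompact
  -- the pair identified by everything
  obtain ⟨⟨u₀, v₀⟩, huv⟩ :=
    IsCompact.nonempty_iInter_of_sequence_nonempty_isCompact_isClosed T hTanti hTne
      (hTcompact 0) hTclosed
  simp only [Set.mem_iInter] at huv
  have huvne : u₀ ≠ v₀ := (huv 0).1
  have huveq : ∀ k, Φ (d k) u₀ = Φ (d k) v₀ := fun k => (huv k).2
  have key2 : ∀ p : P, Φ p u₀ = Φ p v₀ := by
    intro p
    obtain ⟨k, hk | ⟨e, he⟩⟩ := hdvd p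
    · rw [hk]; exact huveq k
    · rw [he, add_comm, hact]
      simp only [Function.comp_apply]
      rw [huveq k]
  -- the sets of points with nontrivial fiber
  set S : ℕ → Set X := fun k => (fun q : X × X => Φ (d k) q.1) '' T k with hSdef
  have hScompact : ∀ k, IsCompact (S k) :=
    fun k => (hTcompact k).image ((hcont _).comp continuous_fst)
  have hSclosed : ∀ k, IsClosed (S k) := fun k => (hScompact k).isClosed
  have hSne : ∀ k, (S k).Nonempty := fun k => (hTne k).image _
  have hSanti : ∀ k, S (k + 1) ⊆ S k := by
    intro k x hx
    obtain ⟨⟨u, v⟩, ⟨hne, heq⟩, hxeq⟩ := hx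
    obtain ⟨e, he⟩ := hstep k
    obtain ⟨u', hu'⟩ := hsurj e u
    obtain ⟨v', hv'⟩ := hsurj e v
    refine ⟨(u', v'), ⟨?_, ?_⟩, ?_⟩
    · intro h
      apply hne
      rw [← hu', ← hv']
      exact congrArg (Φ e) h
    · show Φ (d k) u' = Φ (d k) v'
      rw [he, hact]
      simp only [Function.comp_apply]
      rw [hu', hv', heq]
    · show Φ (d k) u' = x
      rw [he, hact]
      simp only [Function.comp_apply]
      rw [hu']
      exact hxeq
  obtain ⟨x₀, hx₀⟩ :=
    IsCompact.nonempty_iInter_of_sequence_nonempty_isCompact_isClosed S hSanti hSne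
      (hScompact 0) hSclosed
  simp only [Set.mem_iInter] at hx₀
  have hfib : ∀ k, ∃ u v : X, u ≠ v ∧ Φ (d k) u = x₀ ∧ Φ (d k) v = x₀ := by
    intro k
    obtain ⟨⟨u, v⟩, ⟨hne, heq⟩, hxeq⟩ := hx₀ k
    exact ⟨u, v, hne, hxeq, by rw [← heq]; exact hxeq⟩
  refine ⟨⟨x₀, ?_⟩, u₀, v₀, huvne, key2⟩
  intro p
  obtain ⟨k, hk | ⟨e, he⟩⟩ := hdvd p
  · obtain ⟨u, v, hne, hu, hv⟩ := hfib k
    refine ⟨u, ?_, v, ?_, hne⟩ <;>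
      simp only [Set.mem_preimage, Set.mem_singleton_iff, hk] <;> assumption
  · obtain ⟨u, v, hne, hu, hv⟩ := hfib k
    obtain ⟨u', hu'⟩ := hsurj e u
    obtain ⟨v', hv'⟩ := hsurj e v
    refine ⟨u', ?_, v', ?_, ?_⟩
    · show Φ p u' = x₀
      rw [he, hact]
      simp only [Function.comp_apply]
      rw [hu']
      exact hu
    · show Φ p v' = x₀
      rw [he, hact]
      simp only [Function.comp_apply]
      rw [hv']
      exact hv
    · intro h
      apply hne
      rw [← hu', ← hv']
      exact congrArg (Φ e) h
end

section
/- There exists a compact metric space X and a CSLI map φ : X → X such that φ admits no cocycle; that is, there is no continuous function ω : X → ℝ with ω ≥ 0 and ∑_{x ∈ φ⁻¹({y})} ω(x) = 1 for all y ∈ X. In particular, there exists a CSLI map on a compact metric space that is not a local homeomorphism. -/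
open Set Filter Topology

noncomputable def aa (i n : ℕ) : ℝ := (1/2)^(i+1) * (1/3)^(n+1)
noncomputable def bb (i : ℕ) : ℝ := 1 - (1/2)^(i+1)
noncomputable def cc (k i : ℕ) : ℝ := 2 - (1/3)^(k+1) * (1 + (1/2)^(i+1))
noncomputable def ss (k : ℕ) : ℝ := 2 - (1/3)^(k+1)

def XS : Set ℝ :=
  {x | x = 0 ∨ x = 1 ∨ x = 2 ∨ (∃ i n, x = aa i n) ∨ (∃ i, x = bb i) ∨
    (∃ k i, x = cc k i) ∨ (∃ k, x = ss k)}

lemma hpow2_pos (i : ℕ) : 0 < (1/2:ℝ)^(i+1) := by positivity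
lemma hpow3_pos (n : ℕ) : 0 < (1/3:ℝ)^(n+1) := by positivity
lemma hpow2_le (i : ℕ) : (1/2:ℝ)^(i+1) ≤ 1/2 := by
  calc (1/2:ℝ)^(i+1) ≤ (1/2:ℝ)^1 :=
        pow_le_pow_of_le_one (by norm_num) (by norm_num) (by omega)
    _ = 1/2 := pow_one _
lemma hpow3_le (n : ℕ) : (1/3:ℝ)^(n+1) ≤ 1/3 := by
  calc (1/3:ℝ)^(n+1) ≤ (1/3:ℝ)^1 :=
        pow_le_pow_of_le_one (by norm_num) (by norm_num) (by omega)
    _ = 1/3 := pow_one _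
lemma hpow2_le_one (i : ℕ) : (1/2:ℝ)^(i+1) ≤ 1 := by nlinarith [hpow2_le i]

lemma aa_pos (i n : ℕ) : 0 < aa i n := by
  unfold aa; positivity
lemma aa_le (i n : ℕ) : aa i n ≤ 1/6 := by
  unfold aa
  nlinarith [hpow2_le i, hpow3_le n, hpow2_pos i, hpow3_pos n]
lemma bb_ge (i : ℕ) : 1/2 ≤ bb i := by unfold bb; nlinarith [hpow2_le i]
lemma bb_lt (i : ℕ) : bb i < 1 := by unfold bb; nlinarith [hpow2_pos i]
lemma cc_ge (k i : ℕ) : 3/2 ≤ cc k i := by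
  unfold cc
  nlinarith [hpow3_le k, hpow2_le i, hpow3_pos k, hpow2_pos i]
lemma cc_lt (k i : ℕ) : cc k i < 2 := by
  unfold cc
  nlinarith [hpow3_pos k, hpow2_pos i]
lemma ss_ge (k : ℕ) : 5/3 ≤ ss k := by unfold ss; nlinarith [hpow3_le k]
lemma ss_lt (k : ℕ) : ss k < 2 := by unfold ss; nlinarith [hpow3_pos k]

noncomputable def gg (x : ℝ) : ℝ := if x < 1/3 then x/3 else if x < 5/4 then (1-x)/3 else 3*x-4

lemma gg_low {x : ℝ} (h : x < 1/3) : gg x = x/3 := by rw [gg, if_pos h]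
lemma gg_mid {x : ℝ} (h1 : ¬ x < 1/3) (h2 : x < 5/4) : gg x = (1-x)/3 := by
  rw [gg, if_neg h1, if_pos h2]
lemma gg_up {x : ℝ} (h2 : ¬ x < 5/4) : gg x = 3*x-4 := by
  rw [gg, if_neg (by push_neg at h2 ⊢; linarith), if_neg h2]

lemma gg_zero : gg 0 = 0 := by rw [gg_low (by norm_num)]; norm_num
lemma gg_one : gg 1 = 0 := by rw [gg_mid (by norm_num) (by norm_num)]; norm_num
lemma gg_two : gg 2 = 2 := by rw [gg_up (by norm_num)]; norm_num
lemma gg_aa (i n : ℕ) : gg (aa i n) = aa i (n+1) := by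
  rw [gg_low (by linarith [aa_le i n])]
  unfold aa
  rw [pow_succ]
  ring
lemma gg_bb (i : ℕ) : gg (bb i) = aa i 0 := by
  rw [gg_mid (by push_neg; linarith [bb_ge i]) (by linarith [bb_lt i])]
  unfold bb aa
  norm_num
  ring
lemma gg_cc0 (i : ℕ) : gg (cc 0 i) = bb i := by
  rw [gg_up (by push_neg; linarith [cc_ge 0 i])]
  unfold cc bb
  norm_num
  ring
lemma gg_cc (k i : ℕ) : gg (cc (k+1) i) = cc k i := by
  rw [gg_up (by push_neg; linarith [cc_ge (k+1) i])]
  unfold cc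
  rw [pow_succ]
  ring
lemma gg_ss0 : gg (ss 0) = 1 := by
  rw [gg_up (by push_neg; linarith [ss_ge 0])]
  unfold ss
  norm_num
lemma gg_ss (k : ℕ) : gg (ss (k+1)) = ss k := by
  rw [gg_up (by push_neg; linarith [ss_ge (k+1)])]
  unfold ss
  rw [pow_succ]
  ring

lemma mem0 : (0:ℝ) ∈ XS := Or.inl rfl
lemma mem1 : (1:ℝ) ∈ XS := Or.inr (Or.inl rfl)
lemma mem2 : (2:ℝ) ∈ XS := Or.inr (Or.inr (Or.inl rfl))
lemma mem_aa (i n : ℕ) : aa i n ∈ XS := Or.inr (Or.inr (Or.inr (Or.inl ⟨i, n, rfl⟩)))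
lemma mem_bb (i : ℕ) : bb i ∈ XS := Or.inr (Or.inr (Or.inr (Or.inr (Or.inl ⟨i, rfl⟩))))
lemma mem_cc (k i : ℕ) : cc k i ∈ XS :=
  Or.inr (Or.inr (Or.inr (Or.inr (Or.inr (Or.inl ⟨k, i, rfl⟩)))))
lemma mem_ss (k : ℕ) : ss k ∈ XS :=
  Or.inr (Or.inr (Or.inr (Or.inr (Or.inr (Or.inr ⟨k, rfl⟩)))))

lemma mem_XS_iff {x : ℝ} : x ∈ XS ↔ x = 0 ∨ x = 1 ∨ x = 2 ∨ (∃ i n, x = aa i n) ∨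
    (∃ i, x = bb i) ∨ (∃ k i, x = cc k i) ∨ (∃ k, x = ss k) := Iff.rfl

lemma gg_mapsTo {x : ℝ} (hx : x ∈ XS) : gg x ∈ XS := by
  rcases mem_XS_iff.mp hx with rfl|rfl|rfl|⟨i,n,rfl⟩|⟨i,rfl⟩|⟨k,i,rfl⟩|⟨k,rfl⟩
  · rw [gg_zero]; exact mem0
  · rw [gg_one]; exact mem0
  · rw [gg_two]; exact mem2
  · rw [gg_aa]; exact mem_aa i (n+1)
  · rw [gg_bb]; exact mem_aa i 0
  · cases k with
    | zero => rw [gg_cc0]; exact mem_bb i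
    | succ k => rw [gg_cc]; exact mem_cc k i
  · cases k with
    | zero => rw [gg_ss0]; exact mem1
    | succ k => rw [gg_ss]; exact mem_ss k

noncomputable def φX : ↥XS → ↥XS := fun x => ⟨gg x.1, gg_mapsTo x.2⟩

lemma fact23 (p q : ℕ) : (2^p*3^q : ℕ).factorization 2 = p ∧ (2^p*3^q : ℕ).factorization 3 = q := by
  rw [Nat.factorization_mul (pow_ne_zero _ (by norm_num : (2:ℕ) ≠ 0))
      (pow_ne_zero _ (by norm_num : (3:ℕ) ≠ 0)),
    Nat.Prime.factorization_pow Nat.prime_two, Nat.Prime.factorization_pow Nat.prime_three]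
  simp

lemma nat23 {p q p' q' : ℕ} (h : 2^p*3^q = 2^p'*3^q') : p = p' ∧ q = q' := by
  have h2 := congrArg (fun m : ℕ => m.factorization 2) h
  have h3 := congrArg (fun m : ℕ => m.factorization 3) h
  rw [(fact23 p q).1, (fact23 p' q').1] at h2
  rw [(fact23 p q).2, (fact23 p' q').2] at h3
  exact ⟨h2, h3⟩

lemma pow23_inj {p q p' q' : ℕ} (h : (1/2:ℝ)^p*(1/3)^q = (1/2:ℝ)^p'*(1/3)^q') :
    p = p' ∧ q = q' := by
  simp only [one_div, inv_pow, ← mul_inv] at h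
  have h2 : ((2:ℝ)^p*3^q) = ((2:ℝ)^p'*3^q') := inv_injective h
  have h3 : ((2^p*3^q : ℕ) : ℝ) = ((2^p'*3^q' : ℕ) : ℝ) := by push_cast; exact h2
  exact nat23 (by exact_mod_cast h3)

lemma aa_inj {i n i' n' : ℕ} (h : aa i n = aa i' n') : i = i' ∧ n = n' := by
  have := pow23_inj (p := i+1) (q := n+1) (p' := i'+1) (q' := n'+1) h
  omega

lemma fib1 (i n : ℕ) :
    φX ⁻¹' {⟨aa i (n+1), mem_aa i (n+1)⟩} = {(⟨aa i n, mem_aa i n⟩ : ↥XS)} := by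
  ext x
  simp only [Set.mem_preimage, Set.mem_singleton_iff]
  constructor
  · intro hx
    have hval : gg x.1 = aa i (n+1) := congrArg Subtype.val hx
    have hT0 : 0 < aa i (n+1) := aa_pos i (n+1)
    have hT6 : aa i (n+1) ≤ 1/6 := aa_le i (n+1)
    rcases mem_XS_iff.mp x.2 with h|h|h|⟨i',n',h⟩|⟨i',h⟩|⟨k',i',h⟩|⟨k',h⟩
    · rw [h, gg_zero] at hval; linarith
    · rw [h, gg_one] at hval; linarith
    · rw [h, gg_two] at hval; linarith
    · rw [h, gg_aa] at hval
      obtain ⟨hi, hn⟩ := aa_inj hval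
      apply Subtype.ext
      rw [h, hi]
      congr 1
      omega
    · rw [h, gg_bb] at hval
      obtain ⟨-, hn⟩ := aa_inj hval
      omega
    · rcases k' with _|k'
      · rw [h, gg_cc0] at hval; linarith [bb_ge i']
      · rw [h, gg_cc] at hval; linarith [cc_ge k' i']
    · rcases k' with _|k'
      · rw [h, gg_ss0] at hval; linarith
      · rw [h, gg_ss] at hval; linarith [ss_ge k']
  · rintro rfl
    exact Subtype.ext (gg_aa i n)

lemma fib2 (i : ℕ) :
    φX ⁻¹' {⟨aa i 0, mem_aa i 0⟩} = {(⟨bb i, mem_bb i⟩ : ↥XS)} := by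
  ext x
  simp only [Set.mem_preimage, Set.mem_singleton_iff]
  constructor
  · intro hx
    have hval : gg x.1 = aa i 0 := congrArg Subtype.val hx
    have hT0 : 0 < aa i 0 := aa_pos i 0
    have hT6 : aa i 0 ≤ 1/6 := aa_le i 0
    rcases mem_XS_iff.mp x.2 with h|h|h|⟨i',n',h⟩|⟨i',h⟩|⟨k',i',h⟩|⟨k',h⟩
    · rw [h, gg_zero] at hval; linarith
    · rw [h, gg_one] at hval; linarith
    · rw [h, gg_two] at hval; linarith
    · rw [h, gg_aa] at hval
      obtain ⟨-, hn⟩ := aa_inj hval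
      omega
    · rw [h, gg_bb] at hval
      obtain ⟨hi, -⟩ := aa_inj hval
      exact Subtype.ext (by rw [h, hi])
    · rcases k' with _|k'
      · rw [h, gg_cc0] at hval; linarith [bb_ge i']
      · rw [h, gg_cc] at hval; linarith [cc_ge k' i']
    · rcases k' with _|k'
      · rw [h, gg_ss0] at hval; linarith
      · rw [h, gg_ss] at hval; linarith [ss_ge k']
  · rintro rfl
    exact Subtype.ext (gg_bb i)

lemma fib0 :
    φX ⁻¹' {⟨0, mem0⟩} = {(⟨0, mem0⟩ : ↥XS), (⟨1, mem1⟩ : ↥XS)} := by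
  ext x
  simp only [Set.mem_preimage, Set.mem_singleton_iff, Set.mem_insert_iff]
  constructor
  · intro hx
    have hval : gg x.1 = 0 := congrArg Subtype.val hx
    rcases mem_XS_iff.mp x.2 with h|h|h|⟨i',n',h⟩|⟨i',h⟩|⟨k',i',h⟩|⟨k',h⟩
    · exact Or.inl (Subtype.ext h)
    · exact Or.inr (Subtype.ext h)
    · rw [h, gg_two] at hval; linarith
    · rw [h, gg_aa] at hval; linarith [aa_pos i' (n'+1)]
    · rw [h, gg_bb] at hval; linarith [aa_pos i' 0]
    · rcases k' with _|k'
      · rw [h, gg_cc0] at hval; linarith [bb_ge i']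
      · rw [h, gg_cc] at hval; linarith [cc_ge k' i']
    · rcases k' with _|k'
      · rw [h, gg_ss0] at hval; linarith
      · rw [h, gg_ss] at hval; linarith [ss_ge k']
  · rintro (rfl|rfl)
    · exact Subtype.ext gg_zero
    · exact Subtype.ext gg_one

lemma surj_φX : Function.Surjective φX := by
  rintro ⟨v, hv⟩
  rcases mem_XS_iff.mp hv with rfl|rfl|rfl|⟨i,n,rfl⟩|⟨i,rfl⟩|⟨k,i,rfl⟩|⟨k,rfl⟩
  · exact ⟨⟨0, mem0⟩, Subtype.ext gg_zero⟩
  · exact ⟨⟨ss 0, mem_ss 0⟩, Subtype.ext gg_ss0⟩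
  · exact ⟨⟨2, mem2⟩, Subtype.ext gg_two⟩
  · cases n with
    | zero => exact ⟨⟨bb i, mem_bb i⟩, Subtype.ext (gg_bb i)⟩
    | succ n => exact ⟨⟨aa i n, mem_aa i n⟩, Subtype.ext (gg_aa i n)⟩
  · exact ⟨⟨cc 0 i, mem_cc 0 i⟩, Subtype.ext (gg_cc0 i)⟩
  · exact ⟨⟨cc (k+1) i, mem_cc (k+1) i⟩, Subtype.ext (gg_cc k i)⟩
  · exact ⟨⟨ss (k+1), mem_ss (k+1)⟩, Subtype.ext (gg_ss k)⟩

lemma trich {x : ℝ} (hx : x ∈ XS) : x ≤ 1/6 ∨ (1/2 ≤ x ∧ x ≤ 1) ∨ 3/2 ≤ x := by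
  rcases mem_XS_iff.mp hx with rfl|rfl|rfl|⟨i,n,rfl⟩|⟨i,rfl⟩|⟨k,i,rfl⟩|⟨k,rfl⟩
  · left; norm_num
  · right; left; norm_num
  · right; right; norm_num
  · left; exact aa_le i n
  · right; left; exact ⟨bb_ge i, le_of_lt (bb_lt i)⟩
  · right; right; exact cc_ge k i
  · right; right; linarith [ss_ge k]

lemma cont_φX : Continuous φX := by
  apply Continuous.subtype_mk
  rw [continuous_iff_continuousAt]
  intro x
  have hc : ContinuousAt gg x.1 := by
    rcases trich x.2 with h|h|h
    · apply ContinuousAt.congr (continuous_id.div_const 3).continuousAt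
      filter_upwards [Iio_mem_nhds (show x.1 < 1/3 by linarith)] with y hy
      exact (gg_low hy).symm
    · apply ContinuousAt.congr (((continuous_const.sub continuous_id).div_const 3)).continuousAt
      filter_upwards [Ioo_mem_nhds (show 1/3 < x.1 by linarith) (show x.1 < 5/4 by linarith)]
        with y hy
      exact (gg_mid (by push_neg; linarith [hy.1]) hy.2).symm
    · have hcont : Continuous fun y : ℝ => 3*y-4 := by continuity
      apply ContinuousAt.congr hcont.continuousAt
      filter_upwards [Ioi_mem_nhds (show 5/4 < x.1 by linarith)] with y hy
      exact (gg_up (not_lt.mpr (le_of_lt (mem_Ioi.mp hy)))).symm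
  exact hc.comp continuous_subtype_val.continuousAt

lemma linj_φX : LocallyInjective φX := by
  intro x
  rcases trich x.2 with h|h|h
  · refine ⟨Subtype.val ⁻¹' Iio (1/3), (isOpen_Iio.preimage continuous_subtype_val).mem_nhds
      (show x.1 < 1/3 by linarith), ?_⟩
    intro u hu v hv huv
    have hval : gg u.1 = gg v.1 := congrArg Subtype.val huv
    rw [gg_low hu, gg_low hv] at hval
    exact Subtype.ext (by linarith)
  · refine ⟨Subtype.val ⁻¹' Ioo (1/3) (5/4), (isOpen_Ioo.preimage continuous_subtype_val).mem_nhds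
      (show x.1 ∈ Ioo (1/3:ℝ) (5/4) from ⟨by linarith, by linarith⟩), ?_⟩
    intro u hu v hv huv
    have hval : gg u.1 = gg v.1 := congrArg Subtype.val huv
    rw [gg_mid (by push_neg; linarith [hu.1]) hu.2, gg_mid (by push_neg; linarith [hv.1]) hv.2]
      at hval
    exact Subtype.ext (by linarith)
  · refine ⟨Subtype.val ⁻¹' Ioi (5/4), (isOpen_Ioi.preimage continuous_subtype_val).mem_nhds
      (show (5/4:ℝ) < x.1 by linarith), ?_⟩
    intro u hu v hv huv
    have hval : gg u.1 = gg v.1 := congrArg Subtype.val huv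
    rw [gg_up (not_lt.mpr (le_of_lt (show (5/4:ℝ) < u.1 from hu))),
      gg_up (not_lt.mpr (le_of_lt (show (5/4:ℝ) < v.1 from hv)))] at hval
    exact Subtype.ext (by linarith)

def Aset : Set ℝ := {x | ∃ i n, x = aa i n}
def Bset : Set ℝ := {x | ∃ i, x = bb i}
def Cset : Set ℝ := {x | ∃ k i, x = cc k i}
def Sset : Set ℝ := {x | ∃ k, x = ss k}

lemma XS_eq : XS = ({0} ∪ Aset) ∪ (({1} ∪ Bset) ∪ (({2} ∪ Sset) ∪ Cset)) := by
  ext x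
  simp only [XS, Aset, Bset, Cset, Sset, mem_setOf_eq, mem_union, mem_singleton_iff]
  constructor
  · rintro (h|h|h|h|h|h|h)
    · exact Or.inl (Or.inl h)
    · exact Or.inr (Or.inl (Or.inl h))
    · exact Or.inr (Or.inr (Or.inl (Or.inl h)))
    · exact Or.inl (Or.inr h)
    · exact Or.inr (Or.inl (Or.inr h))
    · exact Or.inr (Or.inr (Or.inr h))
    · exact Or.inr (Or.inr (Or.inl (Or.inr h)))
  · rintro ((h|h)|((h|h)|((h|h)|h)))
    · exact Or.inl h
    · exact Or.inr (Or.inr (Or.inr (Or.inl h)))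
    · exact Or.inr (Or.inl h)
    · exact Or.inr (Or.inr (Or.inr (Or.inr (Or.inl h))))
    · exact Or.inr (Or.inr (Or.inl h))
    · exact Or.inr (Or.inr (Or.inr (Or.inr (Or.inr (Or.inr h)))))
    · exact Or.inr (Or.inr (Or.inr (Or.inr (Or.inr (Or.inl h)))))

lemma isClosed_union_far {K E : Set ℝ} (hK : IsClosed K)
    (h : ∀ ε > 0, {x ∈ E | ∀ y ∈ K, ε ≤ dist x y}.Finite) : IsClosed (K ∪ E) := by
  rw [← isOpen_compl_iff, Metric.isOpen_iff]
  intro z hz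
  simp only [mem_compl_iff, mem_union, not_or] at hz
  obtain ⟨hzK, hzE⟩ := hz
  obtain ⟨δ, hδ0, hδ⟩ := Metric.isOpen_iff.mp hK.isOpen_compl z hzK
  have hFfin : {x ∈ E | ∀ y ∈ K, δ/2 ≤ dist x y}.Finite := h (δ/2) (by linarith)
  have hzF : z ∉ {x ∈ E | ∀ y ∈ K, δ/2 ≤ dist x y} := fun hzF' => hzE hzF'.1
  obtain ⟨δ₂, hδ₂0, hδ₂⟩ := Metric.isOpen_iff.mp hFfin.isClosed.isOpen_compl z hzF
  refine ⟨min (δ/2) δ₂, by positivity, ?_⟩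
  intro w hw
  rw [Metric.mem_ball] at hw
  simp only [mem_compl_iff, mem_union, not_or]
  have hw1 : dist w z < δ/2 := lt_of_lt_of_le hw (min_le_left _ _)
  have hw2 : dist w z < δ₂ := lt_of_lt_of_le hw (min_le_right _ _)
  constructor
  · intro hwK
    exact (hδ (by rw [Metric.mem_ball]; linarith)) hwK
  · intro hwE
    by_cases hwF : w ∈ {x ∈ E | ∀ y ∈ K, δ/2 ≤ dist x y}
    · exact (hδ₂ (by rw [Metric.mem_ball]; exact hw2)) hwF
    · simp only [mem_setOf_eq, not_and, not_forall, not_le] at hwF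
      obtain ⟨y, hyK, hy⟩ := hwF hwE
      have hzy : dist y z < δ := by
        have := dist_triangle y w z
        have hcomm : dist y w = dist w y := dist_comm y w
        linarith
      exact (hδ (by rw [Metric.mem_ball]; exact hzy)) hyK

lemma idx_le {b ε : ℝ} (hb0 : 0 ≤ b) (hb1 : b ≤ 1) {m N : ℕ}
    (h1 : ε ≤ b^m) (h2 : b^N < ε) : m ≤ N := by
  by_contra hc
  push_neg at hc
  have := pow_le_pow_of_le_one hb0 hb1 hc.le
  linarith

lemma far_Aset : ∀ ε > 0, {x ∈ Aset | ∀ y ∈ ({0} : Set ℝ), ε ≤ dist x y}.Finite := by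
  intro ε hε
  obtain ⟨N, hN⟩ := exists_pow_lt_of_lt_one hε (show (1/2:ℝ) < 1 by norm_num)
  apply Set.Finite.subset (((Set.finite_Iic N).prod (Set.finite_Iic N)).image
    (fun p : ℕ × ℕ => aa p.1 p.2))
  rintro x ⟨⟨i, n, rfl⟩, hfar⟩
  have hd := hfar 0 rfl
  rw [Real.dist_eq, sub_zero, abs_of_pos (aa_pos i n)] at hd
  have hb1 : aa i n ≤ (1/2)^(i+1) := by
    unfold aa; nlinarith [hpow3_le n, hpow2_pos i, hpow3_pos n]
  have hb2 : aa i n ≤ (1/2)^(n+1) := by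
    unfold aa
    have h3 : (1/3:ℝ)^(n+1) ≤ (1/2)^(n+1) := pow_le_pow_left₀ (by norm_num) (by norm_num) _
    nlinarith [hpow2_le_one i, hpow3_pos n, hpow2_pos i]
  have hi : i + 1 ≤ N := idx_le (by norm_num) (by norm_num) (hd.trans hb1) hN
  have hn : n + 1 ≤ N := idx_le (by norm_num) (by norm_num) (hd.trans hb2) hN
  exact ⟨(i, n), ⟨by simp; omega, by simp; omega⟩, rfl⟩

lemma far_Bset : ∀ ε > 0, {x ∈ Bset | ∀ y ∈ ({1} : Set ℝ), ε ≤ dist x y}.Finite := by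
  intro ε hε
  obtain ⟨N, hN⟩ := exists_pow_lt_of_lt_one hε (show (1/2:ℝ) < 1 by norm_num)
  apply Set.Finite.subset ((Set.finite_Iic N).image (fun i : ℕ => bb i))
  rintro x ⟨⟨i, rfl⟩, hfar⟩
  have hd := hfar 1 rfl
  have heq : dist (bb i) 1 = (1/2)^(i+1) := by
    rw [Real.dist_eq]
    have : bb i - 1 = -((1/2:ℝ)^(i+1)) := by unfold bb; ring
    rw [this, abs_neg, abs_of_pos (hpow2_pos i)]
  rw [heq] at hd
  have hi : i + 1 ≤ N := idx_le (by norm_num) (by norm_num) hd hN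
  exact ⟨i, by simp; omega, rfl⟩

lemma far_Sset : ∀ ε > 0, {x ∈ Sset | ∀ y ∈ ({2} : Set ℝ), ε ≤ dist x y}.Finite := by
  intro ε hε
  obtain ⟨N, hN⟩ := exists_pow_lt_of_lt_one hε (show (1/3:ℝ) < 1 by norm_num)
  apply Set.Finite.subset ((Set.finite_Iic N).image (fun k : ℕ => ss k))
  rintro x ⟨⟨k, rfl⟩, hfar⟩
  have hd := hfar 2 rfl
  have heq : dist (ss k) 2 = (1/3)^(k+1) := by
    rw [Real.dist_eq]
    have : ss k - 2 = -((1/3:ℝ)^(k+1)) := by unfold ss; ring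
    rw [this, abs_neg, abs_of_pos (hpow3_pos k)]
  rw [heq] at hd
  have hk : k + 1 ≤ N := idx_le (by norm_num) (by norm_num) hd hN
  exact ⟨k, by simp; omega, rfl⟩

lemma far_Cset : ∀ ε > 0, {x ∈ Cset | ∀ y ∈ ({2} ∪ Sset : Set ℝ), ε ≤ dist x y}.Finite := by
  intro ε hε
  obtain ⟨N2, hN2⟩ := exists_pow_lt_of_lt_one hε (show (1/2:ℝ) < 1 by norm_num)
  obtain ⟨N3, hN3⟩ := exists_pow_lt_of_lt_one hε (show (1/3:ℝ) < 1 by norm_num)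
  apply Set.Finite.subset (((Set.finite_Iic N3).prod (Set.finite_Iic N2)).image
    (fun p : ℕ × ℕ => cc p.1 p.2))
  rintro x ⟨⟨k, i, rfl⟩, hfar⟩
  have hd := hfar (ss k) (Or.inr ⟨k, rfl⟩)
  have heq : dist (cc k i) (ss k) = (1/3)^(k+1) * (1/2)^(i+1) := by
    rw [Real.dist_eq]
    have : cc k i - ss k = -((1/3:ℝ)^(k+1) * (1/2)^(i+1)) := by unfold cc ss; ring
    rw [this, abs_neg, abs_of_pos (by positivity)]
  rw [heq] at hd
  have hb1 : (1/3:ℝ)^(k+1) * (1/2)^(i+1) ≤ (1/2)^(i+1) := by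
    nlinarith [hpow3_le k, hpow2_pos i, hpow3_pos k]
  have hb2 : (1/3:ℝ)^(k+1) * (1/2)^(i+1) ≤ (1/3)^(k+1) := by
    nlinarith [hpow2_le_one i, hpow3_pos k, hpow2_pos i]
  have hi : i + 1 ≤ N2 := idx_le (by norm_num) (by norm_num) (hd.trans hb1) hN2
  have hk : k + 1 ≤ N3 := idx_le (by norm_num) (by norm_num) (hd.trans hb2) hN3
  exact ⟨(k, i), ⟨by simp; omega, by simp; omega⟩, rfl⟩

lemma isClosed_XS : IsClosed XS := by
  rw [XS_eq]
  exact ((isClosed_union_far isClosed_singleton far_Aset).union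
    ((isClosed_union_far isClosed_singleton far_Bset).union
      (isClosed_union_far (isClosed_union_far isClosed_singleton far_Sset) far_Cset)))

lemma XS_sub : XS ⊆ Icc (0:ℝ) 2 := by
  intro x hx
  rcases mem_XS_iff.mp hx with rfl|rfl|rfl|⟨i,n,rfl⟩|⟨i,rfl⟩|⟨k,i,rfl⟩|⟨k,rfl⟩
  · constructor <;> norm_num
  · constructor <;> norm_num
  · constructor <;> norm_num
  · exact ⟨(aa_pos i n).le, by linarith [aa_le i n]⟩
  · exact ⟨by linarith [bb_ge i], by linarith [bb_lt i]⟩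
  · exact ⟨by linarith [cc_ge k i], (cc_lt k i).le⟩
  · exact ⟨by linarith [ss_ge k], (ss_lt k).le⟩

lemma compact_XS : IsCompact XS :=
  IsCompact.of_isClosed_subset isCompact_Icc isClosed_XS XS_sub

lemma tendsto_half_pow : Tendsto (fun i : ℕ => (1/2:ℝ)^(i+1)) atTop (𝓝 0) := by
  have h := tendsto_pow_atTop_nhds_zero_of_lt_one (show (0:ℝ) ≤ 1/2 by norm_num)
    (show (1/2:ℝ) < 1 by norm_num)
  exact h.comp (tendsto_add_atTop_nat 1)

lemma tendsto_bb : Tendsto (fun i : ℕ => bb i) atTop (𝓝 1) := by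
  have h : Tendsto (fun i : ℕ => 1 - (1/2:ℝ)^(i+1)) atTop (𝓝 (1-0)) :=
    tendsto_const_nhds.sub tendsto_half_pow
  rw [sub_zero] at h
  simpa [bb] using h

lemma tendsto_aa0 : Tendsto (fun i : ℕ => aa i 0) atTop (𝓝 0) := by
  have h : Tendsto (fun i : ℕ => (1/2:ℝ)^(i+1) * (1/3)^(0+1)) atTop (𝓝 (0 * (1/3)^(0+1))) :=
    tendsto_half_pow.mul_const _
  rw [zero_mul] at h
  simpa [aa] using h

lemma no_cocycle : ¬ ∃ ω : ↥XS → ℝ, IsCocycle φX ω := by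
  rintro ⟨ω, hcont, -, hsum⟩
  have key : ∀ (u : ℕ → ↥XS) (x : ↥XS), Tendsto (fun i => (u i : ℝ)) atTop (𝓝 (x : ℝ)) →
      (∀ i, ω (u i) = 1) → ω x = 1 := by
    intro u x hu hall
    have h1 : Tendsto (fun i => ω (u i)) atTop (𝓝 (ω x)) :=
      (hcont.tendsto x).comp (tendsto_subtype_rng.mpr hu)
    have h2 : Tendsto (fun i => ω (u i)) atTop (𝓝 1) := by
      simp only [hall]
      exact tendsto_const_nhds
    exact tendsto_nhds_unique h1 h2
  have hωa : ∀ i n, ω ⟨aa i n, mem_aa i n⟩ = 1 := by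
    intro i n
    have h := hsum ⟨aa i (n+1), mem_aa i (n+1)⟩
    rwa [fib1 i n, finsum_mem_singleton] at h
  have hωb : ∀ i, ω ⟨bb i, mem_bb i⟩ = 1 := by
    intro i
    have h := hsum ⟨aa i 0, mem_aa i 0⟩
    rwa [fib2 i, finsum_mem_singleton] at h
  have h1 : ω ⟨1, mem1⟩ = 1 :=
    key (fun i => ⟨bb i, mem_bb i⟩) ⟨1, mem1⟩ tendsto_bb hωb
  have h0 : ω ⟨0, mem0⟩ = 1 :=
    key (fun i => ⟨aa i 0, mem_aa i 0⟩) ⟨0, mem0⟩ tendsto_aa0 (fun i => hωa i 0)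
  have hpair := hsum ⟨0, mem0⟩
  rw [fib0, finsum_mem_pair (by
    intro heq
    have : (0:ℝ) = 1 := congrArg Subtype.val heq
    norm_num at this)] at hpair
  rw [h0, h1] at hpair
  norm_num at hpair

lemma not_lh : ¬ IsLocalHomeomorph φX := by
  intro h
  have hopen := h.isOpenMap
  have hUopen : IsOpen (Subtype.val ⁻¹' Ioo (3/4 : ℝ) (5/4) : Set ↥XS) :=
    isOpen_Ioo.preimage continuous_subtype_val
  have himg : IsOpen (φX '' (Subtype.val ⁻¹' Ioo (3/4 : ℝ) (5/4))) := hopen _ hUopen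
  have h0mem : (⟨0, mem0⟩ : ↥XS) ∈ φX '' (Subtype.val ⁻¹' Ioo (3/4 : ℝ) (5/4)) :=
    ⟨⟨1, mem1⟩, ⟨by norm_num, by norm_num⟩, Subtype.ext gg_one⟩
  obtain ⟨ε, hε, hball⟩ := Metric.isOpen_iff.mp himg _ h0mem
  obtain ⟨N, hN⟩ := exists_pow_lt_of_lt_one hε (show (1/2:ℝ) < 1 by norm_num)
  have hmem : (⟨aa N 1, mem_aa N 1⟩ : ↥XS) ∈ Metric.ball (⟨0, mem0⟩ : ↥XS) ε := by
    rw [Metric.mem_ball, Subtype.dist_eq, Real.dist_eq, sub_zero, abs_of_pos (aa_pos N 1)]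
    have hb1 : aa N 1 ≤ (1/2)^(N+1) := by
      unfold aa; nlinarith [hpow3_le 1, hpow2_pos N, hpow3_pos 1]
    have hb2 : (1/2:ℝ)^(N+1) ≤ (1/2)^N :=
      pow_le_pow_of_le_one (by norm_num) (by norm_num) (by omega)
    linarith
  obtain ⟨u, huU, hueq⟩ := hball hmem
  have hval : gg u.1 = aa N 1 := congrArg Subtype.val hueq
  have hu1 : (3/4:ℝ) < u.1 := huU.1
  have hu2 : u.1 < (5/4:ℝ) := huU.2
  have haN : 0 < aa N 1 := aa_pos N 1
  have haN6 : aa N 1 ≤ 1/6 := aa_le N 1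
  rcases mem_XS_iff.mp u.2 with h'|h'|h'|⟨i',n',h'⟩|⟨i',h'⟩|⟨k',i',h'⟩|⟨k',h'⟩
  · rw [h'] at hu1; linarith
  · rw [h', gg_one] at hval; linarith
  · rw [h'] at hu2; linarith
  · rw [h'] at hu1; linarith [aa_le i' n']
  · rw [h', gg_bb] at hval
    obtain ⟨-, hn⟩ := aa_inj hval
    omega
  · rw [h'] at hu2; linarith [cc_ge k' i']
  · rw [h'] at hu2; linarith [ss_ge k']

/-- There is a compact metric space and a CSLI map on it admitting no cocycle;
in particular the map is not a local homeomorphism. -/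
theorem exists_CSLI_not_admissible :
    ∃ (X : Type) (_ : MetricSpace X), CompactSpace X ∧
      ∃ φ : X → X, CSLI φ ∧ (¬ ∃ ω : X → ℝ, IsCocycle φ ω) ∧ ¬ IsLocalHomeomorph φ := by
  refine ⟨↥XS, inferInstance, isCompact_iff_compactSpace.mp compact_XS,
    φX, ⟨cont_φX, surj_φX, linj_φX⟩, no_cocycle, not_lh⟩
end

section
/- There exists a compact metric space X and a CSLI map φ : X → X such that φ admits a cocycle but φ is not a local homeomorphism. -/
section CSLIExSection

open Filter Topology Set

namespace CSLIEx

inductive Xc : Type where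
  | pt : Xc
  | lim : Xc
  | seq : ℕ → Xc
  deriving DecidableEq

noncomputable def ι : Xc → ℝ
  | .pt => 2
  | .lim => 0
  | .seq n => 1 / (n + 1)

lemma seq_pos (n : ℕ) : (0:ℝ) < 1/(n+1) := by positivity

lemma seq_le_one (n : ℕ) : (1:ℝ)/(n+1) ≤ 1 := by
  rw [div_le_one (by positivity)]
  simp [Nat.cast_nonneg]

lemma seq_inj {n m : ℕ} (h : (1:ℝ)/(n+1) = 1/(m+1)) : n = m := by
  field_simp at h
  have : (n:ℝ) = m := by linarith
  exact_mod_cast this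

lemma ι_inj : Function.Injective ι := by
  intro a b h
  cases a with
  | pt => cases b with
    | pt => rfl
    | lim => simp only [ι] at h; linarith
    | seq n => simp only [ι] at h; linarith [seq_le_one n]
  | lim => cases b with
    | pt => simp only [ι] at h; linarith
    | lim => rfl
    | seq n => simp only [ι] at h; linarith [seq_pos n]
  | seq n => cases b with
    | pt => simp only [ι] at h; linarith [seq_le_one n]
    | lim => simp only [ι] at h; linarith [seq_pos n]
    | seq m => simp only [ι] at h; exact congrArg Xc.seq (seq_inj h)

noncomputable instance : MetricSpace Xc := MetricSpace.induced ι ι_inj inferInstance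

lemma dist_eq (a b : Xc) : dist a b = |ι a - ι b| := rfl

lemma isOpen_pt : IsOpen ({Xc.pt} : Set Xc) := by
  rw [Metric.isOpen_singleton_iff]
  refine ⟨1/2, by norm_num, fun y hy => ?_⟩
  rw [dist_eq] at hy
  cases y with
  | pt => rfl
  | lim => simp only [ι] at hy; rw [abs_of_nonpos (by norm_num)] at hy; linarith
  | seq n =>
      simp only [ι] at hy
      rw [abs_of_nonpos (by linarith [seq_le_one n])] at hy
      linarith [seq_le_one n]

lemma one_div_lt_one_div {n m : ℕ} (h : n < m) : (1:ℝ)/(m+1) < 1/(n+1) := by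
  apply one_div_lt_one_div_of_lt (by positivity)
  have : (n:ℝ) < m := by exact_mod_cast h
  linarith

lemma isOpen_seq (n : ℕ) : IsOpen ({Xc.seq n} : Set Xc) := by
  rw [Metric.isOpen_singleton_iff]
  refine ⟨1/((n+1)*(n+2)), by positivity, fun y hy => ?_⟩
  rw [dist_eq] at hy
  have hn1 : (0:ℝ) < (n:ℝ)+1 := by positivity
  have hn2 : (0:ℝ) < (n:ℝ)+2 := by positivity
  cases y with
  | pt =>
      exfalso
      simp only [ι] at hy
      rw [abs_of_nonneg (by linarith [seq_le_one n])] at hy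
      have h1 : (1:ℝ)/((n+1)*(n+2)) ≤ 1 := by
        rw [div_le_one (by positivity)]; nlinarith
      linarith [seq_le_one n]
  | lim =>
      exfalso
      simp only [ι] at hy
      rw [abs_of_nonpos (by linarith [seq_pos n])] at hy
      have h1 : (1:ℝ)/((n+1)*(n+2)) ≤ 1/(n+1) := by
        apply div_le_div_of_nonneg_left (by norm_num) hn1
        nlinarith
      linarith
  | seq m =>
      simp only [ι] at hy
      have hpos : (0:ℝ) < 1/(((n:ℝ)+1)*((n:ℝ)+2)) := by positivity
      rcases lt_trichotomy m n with hc | hc | hc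
      · exfalso
        have hm1 : (0:ℝ) < (m:ℝ)+1 := by positivity
        have hmn : (m:ℝ)+1 ≤ n := by exact_mod_cast hc
        have q : (1:ℝ)/(m+1) - 1/(n+1) = ((n:ℝ)-m)/(((m:ℝ)+1)*((n:ℝ)+1)) := by
          field_simp
          try ring
        have h2 : (1:ℝ)/(((n:ℝ)+1)*((n:ℝ)+2)) ≤ 1/(m+1) - 1/(n+1) := by
          rw [q]
          calc (1:ℝ)/(((n:ℝ)+1)*((n:ℝ)+2)) ≤ 1/(((m:ℝ)+1)*((n:ℝ)+1)) := by
                gcongr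
                nlinarith
            _ ≤ ((n:ℝ)-m)/(((m:ℝ)+1)*((n:ℝ)+1)) := by
                rw [div_le_div_iff₀ (by positivity) (by positivity)]
                nlinarith [mul_pos hm1 hn1]
        rw [abs_of_nonneg (by linarith)] at hy
        linarith
      · exact congrArg Xc.seq hc
      · exfalso
        have hm1 : (0:ℝ) < (m:ℝ)+1 := by positivity
        have hmn : (n:ℝ)+1 ≤ m := by exact_mod_cast hc
        have q : (1:ℝ)/(n+1) - 1/(m+1) = ((m:ℝ)-n)/(((n:ℝ)+1)*((m:ℝ)+1)) := by
          field_simp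
          try ring
        have h3 : (1:ℝ)/((m:ℝ)+1) ≤ 1/((n:ℝ)+2) :=
          one_div_le_one_div_of_le hn2 (by linarith)
        have q2 : (1:ℝ)/((n:ℝ)+1) - 1/((n:ℝ)+2) = 1/(((n:ℝ)+1)*((n:ℝ)+2)) := by
          field_simp
          try ring
        have h2 : (1:ℝ)/(((n:ℝ)+1)*((n:ℝ)+2)) ≤ 1/(n+1) - 1/(m+1) := by
          linarith
        rw [abs_of_nonpos (by linarith)] at hy
        rw [neg_sub] at hy
        linarith

lemma tendsto_seq : Tendsto (fun n : ℕ => Xc.seq n) atTop (𝓝 Xc.lim) := by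
  rw [tendsto_iff_dist_tendsto_zero]
  have : (fun n : ℕ => dist (Xc.seq n) Xc.lim) = fun n : ℕ => 1/((n:ℝ)+1) := by
    funext n
    rw [dist_eq]
    simp only [ι, sub_zero]
    exact abs_of_pos (seq_pos n)
  rw [this]
  exact tendsto_one_div_add_atTop_nhds_zero_nat

lemma isInducing : IsInducing ι := IsUniformInducing.isInducing ⟨rfl⟩

lemma range_ι : Set.range ι = insert 2 (insert 0 (Set.range fun n : ℕ => 1/((n:ℝ)+1))) := by
  ext x
  constructor
  · rintro ⟨a, rfl⟩
    cases a with
    | pt => exact Or.inl rfl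
    | lim => exact Or.inr (Or.inl rfl)
    | seq n => exact Or.inr (Or.inr ⟨n, rfl⟩)
  · rintro (rfl | rfl | ⟨n, rfl⟩)
    exacts [⟨Xc.pt, rfl⟩, ⟨Xc.lim, rfl⟩, ⟨Xc.seq n, rfl⟩]

instance : CompactSpace Xc := by
  have hemb : Topology.IsEmbedding ι := ⟨isInducing, ι_inj⟩
  rw [← isCompact_univ_iff, hemb.isCompact_iff, Set.image_univ, range_ι]
  exact (tendsto_one_div_add_atTop_nhds_zero_nat.isCompact_insert_range).insert 2

def φc : Xc → Xc
  | .pt => .lim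
  | .lim => .lim
  | .seq 0 => .pt
  | .seq (n+1) => .seq n

lemma nhds_of_isolated {x : Xc} (h : IsOpen ({x} : Set Xc)) : 𝓝 x = pure x :=
  isOpen_singleton_iff_nhds_eq_pure x |>.1 h

lemma continuousAt_of_isolated {f : Xc → Xc} {x : Xc} (h : IsOpen ({x} : Set Xc)) :
    ContinuousAt f x := by
  unfold ContinuousAt
  rw [nhds_of_isolated h]
  exact tendsto_pure_nhds f x

lemma continuous_φc : Continuous φc := by
  rw [continuous_iff_continuousAt]
  intro x
  cases x with
  | pt => exact continuousAt_of_isolated isOpen_pt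
  | seq n => exact continuousAt_of_isolated (isOpen_seq n)
  | lim =>
      rw [Metric.continuousAt_iff]
      intro ε hε
      refine ⟨min (ε/2) (1/2), by positivity, fun {x} hx => ?_⟩
      have hmin2 := min_le_right (ε/2) (1/2)
      have hmin1 := min_le_left (ε/2) (1/2)
      cases x with
      | pt =>
          exfalso
          rw [dist_eq] at hx
          simp only [ι] at hx
          rw [abs_of_nonneg (by norm_num)] at hx
          linarith
      | lim => rw [dist_self]; exact hε
      | seq n =>
          rw [dist_eq] at hx
          simp only [ι, sub_zero] at hx
          rw [abs_of_pos (seq_pos n)] at hx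
          cases n with
          | zero =>
              exfalso
              have h1 : (1:ℝ)/((0:ℕ)+1) = 1 := by norm_num
              rw [h1] at hx
              linarith
          | succ m =>
              push_cast at hx
              rw [dist_eq]
              simp only [φc, ι, sub_zero]
              rw [abs_of_pos (seq_pos m)]
              have key : (1:ℝ)/((m:ℝ)+1) ≤ 2*((1:ℝ)/((m:ℝ)+2)) := by
                rw [mul_one_div, div_le_div_iff₀ (by positivity) (by positivity)]
                have : (0:ℝ) ≤ m := Nat.cast_nonneg m
                linarith
              have h2 : (1:ℝ)/((m:ℝ)+2) < ε/2 := by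
                rw [show ((m:ℝ)+2) = (m:ℝ)+1+1 by ring]
                linarith
              linarith

lemma surjective_φc : Function.Surjective φc := by
  intro y
  cases y with
  | pt => exact ⟨Xc.seq 0, rfl⟩
  | lim => exact ⟨Xc.lim, rfl⟩
  | seq n => exact ⟨Xc.seq (n+1), rfl⟩

lemma locallyInjective_φc : LocallyInjective φc := by
  intro x
  cases x with
  | pt =>
      refine ⟨{Xc.pt}, isOpen_pt.mem_nhds rfl, ?_⟩
      intro a ha b hb _
      simp only [Set.mem_singleton_iff] at ha hb
      rw [ha, hb]
  | seq n =>
      refine ⟨{Xc.seq n}, (isOpen_seq n).mem_nhds rfl, ?_⟩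
      intro a ha b hb _
      simp only [Set.mem_singleton_iff] at ha hb
      rw [ha, hb]
  | lim =>
      refine ⟨Metric.ball Xc.lim (1/3), Metric.ball_mem_nhds _ (by norm_num), ?_⟩
      have hball : ∀ c : Xc, c ∈ Metric.ball Xc.lim (1/3) → c ≠ Xc.pt ∧ c ≠ Xc.seq 0 := by
        intro c hc
        rw [Metric.mem_ball, dist_eq] at hc
        cases c with
        | pt =>
            exfalso
            simp only [ι] at hc
            rw [abs_of_nonneg (by norm_num)] at hc
            norm_num at hc
        | lim => exact ⟨by simp, by simp⟩
        | seq k =>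
            refine ⟨by simp, ?_⟩
            intro hk
            rw [hk] at hc
            simp only [ι] at hc
            norm_num at hc
      intro a ha b hb h
      obtain ⟨hap, ha0⟩ := hball a ha
      obtain ⟨hbp, hb0⟩ := hball b hb
      cases a with
      | pt => exact absurd rfl hap
      | lim =>
          cases b with
          | pt => exact absurd rfl hbp
          | lim => rfl
          | seq l =>
              cases l with
              | zero => exact absurd rfl hb0
              | succ l => simp [φc] at h
      | seq k =>
          cases k with
          | zero => exact absurd rfl ha0
          | succ k =>
              cases b with
              | pt => exact absurd rfl hbp
              | lim => simp [φc] at h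
              | seq l =>
                  cases l with
                  | zero => exact absurd rfl hb0
                  | succ l =>
                      simp only [φc, Xc.seq.injEq] at h
                      rw [h]

def ω : Xc → ℝ := fun x => if x = Xc.pt then 0 else 1

lemma continuous_ω : Continuous ω := by
  rw [continuous_iff_continuousAt]
  intro x
  by_cases hx : x = Xc.pt
  · subst hx
    unfold ContinuousAt
    rw [nhds_of_isolated isOpen_pt]
    exact tendsto_pure_nhds ω Xc.pt
  · have h1 : (fun _ : Xc => (1:ℝ)) =ᶠ[𝓝 x] ω := by
      filter_upwards [(isOpen_compl_iff.mpr isClosed_singleton).mem_nhds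
        (by simpa using hx)] with y hy
      simp only [Set.mem_compl_iff, Set.mem_singleton_iff] at hy
      simp [ω, hy]
    exact continuousAt_const.congr h1

lemma fiber_pt : φc ⁻¹' {Xc.pt} = {Xc.seq 0} := by
  ext z
  cases z with
  | pt => simp [φc]
  | lim => simp [φc]
  | seq n => cases n with
    | zero => simp [φc]
    | succ n => simp [φc]

lemma fiber_lim : φc ⁻¹' {Xc.lim} = {Xc.pt, Xc.lim} := by
  ext z
  cases z with
  | pt => simp [φc]
  | lim => simp [φc]
  | seq n => cases n with
    | zero => simp [φc]
    | succ n => simp [φc]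

lemma fiber_seq (n : ℕ) : φc ⁻¹' {Xc.seq n} = {Xc.seq (n+1)} := by
  ext z
  cases z with
  | pt => simp [φc]
  | lim => simp [φc]
  | seq m => cases m with
    | zero => simp [φc]
    | succ m => simp [φc]

lemma cocycle_ω : IsCocycle φc ω := by
  refine ⟨continuous_ω, fun x => ?_, fun y => ?_⟩
  · unfold ω; split <;> norm_num
  · cases y with
    | pt => rw [fiber_pt, finsum_mem_singleton]; simp [ω]
    | lim => rw [fiber_lim, finsum_mem_pair (by simp)]; simp [ω]
    | seq n => rw [fiber_seq, finsum_mem_singleton]; simp [ω]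

lemma not_localHomeo : ¬ IsLocalHomeomorph φc := by
  intro h
  obtain ⟨e, hpe, hfe⟩ := h Xc.pt
  have h1 : e Xc.pt = Xc.lim := by rw [← hfe]; rfl
  have hlt : Xc.lim ∈ e.target := h1 ▸ e.map_source hpe
  have hsymm : e.symm Xc.lim = Xc.pt := by rw [← h1, e.left_inv hpe]
  have hc : ContinuousAt e.symm Xc.lim := e.continuousAt_symm hlt
  have ht : Tendsto (fun n : ℕ => e.symm (Xc.seq n)) atTop (𝓝 Xc.pt) := by
    have := hc.tendsto.comp tendsto_seq
    rwa [hsymm] at this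
  have h2 : ∀ᶠ n : ℕ in atTop, e.symm (Xc.seq n) = Xc.pt :=
    ht.eventually (Filter.eventually_of_mem (isOpen_pt.mem_nhds rfl) fun y hy => hy)
  have h3 : ∀ᶠ n : ℕ in atTop, Xc.seq n ∈ e.target :=
    tendsto_seq.eventually
      (Filter.eventually_of_mem (e.open_target.mem_nhds hlt) fun y hy => hy)
  obtain ⟨n, hn2, hn3⟩ := (h2.and h3).exists
  have hfin : Xc.seq n = Xc.lim := by
    have hri := e.right_inv hn3
    rw [hn2] at hri
    rw [← hri, h1]
  simp at hfin

end CSLIEx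

end CSLIExSection

/-- There is a compact metric space and a CSLI map on it which admits a cocycle
but is not a local homeomorphism. -/
theorem exists_admissible_CSLI_not_localHomeomorph :
    ∃ (X : Type) (_ : MetricSpace X), CompactSpace X ∧
      ∃ φ : X → X, CSLI φ ∧ (∃ ω : X → ℝ, IsCocycle φ ω) ∧ ¬ IsLocalHomeomorph φ := by
  exact ⟨CSLIEx.Xc, inferInstance, inferInstance, CSLIEx.φc,
    ⟨CSLIEx.continuous_φc, CSLIEx.surjective_φc, CSLIEx.locallyInjective_φc⟩,
    ⟨CSLIEx.ω, CSLIEx.cocycle_ω⟩, CSLIEx.not_localHomeo⟩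
end

section
/- There exists a compact metric space X and an action d ↦ φ_d of the additive semigroup 𝒫 of positive dyadic rationals on X (so φ_{d+e} = φ_d ∘ φ_e for all d, e ∈ 𝒫) such that every φ_d is a local homeomorphism of X that is surjective but not injective, and the action admits a semigroup cocycle ω : 𝒫 × X → ℝ. In particular, there exists a divisible abelian semigroup of CSLI maps on a compact metric space, none of which is a homeomorphism, which is admissible. -/
/-- The additive semigroup of positive dyadic rationals. -/
def PosDyadic : Type :=
  {q : ℚ // 0 < q ∧ ∃ (k : ℤ) (n : ℕ), q = (k : ℚ) / 2 ^ n}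

instance : Add PosDyadic :=
  ⟨fun a b =>
    ⟨a.1 + b.1, add_pos a.2.1 b.2.1, by
      obtain ⟨k, n, hk⟩ := a.2.2
      obtain ⟨k', n', hk'⟩ := b.2.2
      refine ⟨k * 2 ^ n' + k' * 2 ^ n, n + n', ?_⟩
      rw [hk, hk']
      push_cast
      rw [pow_add]
      field_simp⟩⟩

noncomputable section
namespace DyadicCSLI
open scoped Classical

abbrev Xc : Type := (ℕ → Bool) × (ℕ → Bool)

/-- left shift on the second tape -/
def sh (c : ℕ → Bool) : ℕ → Bool := fun i => c (i + 1)

/-- add `2^{-(n+1)}` to the binary word `b` (digits `0..n`), truncating overflow. -/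
def bump : ℕ → (ℕ → Bool) → (ℕ → Bool)
  | 0, b => Function.update b 0 (!b 0)
  | n+1, b =>
      if b (n+1) then bump n (Function.update b (n+1) false)
      else Function.update b (n+1) true


lemma bump_succ_true {n : ℕ} {b : ℕ → Bool} (h : b (n+1) = true) :
    bump (n+1) b = bump n (Function.update b (n+1) false) := by
  simp [bump, h]

lemma bump_succ_false {n : ℕ} {b : ℕ → Bool} (h : b (n+1) = false) :
    bump (n+1) b = Function.update b (n+1) true := by
  simp [bump, h]

def AllT (n : ℕ) (b : ℕ → Bool) : Prop := ∀ i ≤ n, b i = true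

lemma allT_succ {n : ℕ} {b : ℕ → Bool} :
    AllT (n+1) b ↔ AllT n b ∧ b (n+1) = true := by
  constructor
  · intro h; exact ⟨fun i hi => h i (by omega), h (n+1) le_rfl⟩
  · rintro ⟨h1, h2⟩ i hi
    rcases Nat.lt_or_ge i (n+1) with h | h
    · exact h1 i (by omega)
    · have : i = n+1 := by omega
      simpa [this] using h2

lemma allT_agree {n : ℕ} {b b' : ℕ → Bool} (h : ∀ i ≤ n, b i = b' i) :
    AllT n b ↔ AllT n b' := by
  constructor <;> intro ha i hi
  · rw [← h i hi]; exact ha i hi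
  · rw [h i hi]; exact ha i hi

lemma bump_high : ∀ (n : ℕ) (b : ℕ → Bool) (i : ℕ), n < i → bump n b i = b i := by
  intro n
  induction n with
  | zero =>
    intro b i hi
    simp [bump, Function.update_of_ne (by omega : i ≠ 0)]
  | succ n ih =>
    intro b i hi
    by_cases h : b (n+1) = true
    · simp only [bump, h, if_true]
      rw [ih _ _ (by omega), Function.update_of_ne (by omega : i ≠ n+1)]
    · simp only [bump, h, if_false, Bool.not_eq_true] at *
      simp [h, Function.update_of_ne (by omega : i ≠ n+1)]

lemma bump_agree : ∀ (n : ℕ) (b b' : ℕ → Bool), (∀ i ≤ n, b i = b' i) →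
    ∀ i ≤ n, bump n b i = bump n b' i := by
  intro n
  induction n with
  | zero =>
    intro b b' h i hi
    have h0 : b 0 = b' 0 := h 0 le_rfl
    interval_cases i
    simp [bump, h0]
  | succ n ih =>
    intro b b' h i hi
    have hb : b (n+1) = b' (n+1) := h (n+1) le_rfl
    by_cases hc : b (n+1) = true
    · have hc2 : b' (n+1) = true := by rw [← hb]; exact hc
      rw [bump_succ_true hc, bump_succ_true hc2]
      rcases Nat.lt_or_ge i (n+1) with hlt | hge
      · refine ih _ _ ?_ i (by omega)
        intro j hj
        by_cases hj' : j = n+1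
        · subst hj'; simp
        · rw [Function.update_of_ne hj', Function.update_of_ne hj']
          exact h j (by omega)
      · have hi' : i = n+1 := by omega
        subst hi'
        rw [bump_high _ _ _ (by omega), bump_high _ _ _ (by omega)]
        simp
    · have hc' : b (n+1) = false := by simpa using hc
      have hc'' : b' (n+1) = false := by rw [← hb]; exact hc'
      rw [bump_succ_false hc', bump_succ_false hc'']
      rcases Nat.lt_or_ge i (n+1) with hlt | hge
      · rw [Function.update_of_ne (by omega : i ≠ n+1),
           Function.update_of_ne (by omega : i ≠ n+1)]
        exact h i (by omega)
      · have hi' : i = n+1 := by omega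
        subst hi'
        simp

lemma bump_allT : ∀ (n : ℕ) (b : ℕ → Bool), AllT n b → ∀ i ≤ n, bump n b i = false := by
  intro n
  induction n with
  | zero =>
    intro b h i hi
    interval_cases i
    simp [bump, h 0 le_rfl]
  | succ n ih =>
    intro b h i hi
    have hb : b (n+1) = true := h (n+1) le_rfl
    rw [bump_succ_true hb]
    have hA : AllT n (Function.update b (n+1) false) := by
      intro j hj
      rw [Function.update_of_ne (by omega : j ≠ n+1)]
      exact h j (by omega)
    rcases Nat.lt_or_ge i (n+1) with hlt | hge
    · exact ih _ hA i (by omega)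
    · have : i = n+1 := by omega
      subst this
      rw [bump_high _ _ _ (by omega)]
      simp

lemma bump_false_allT : ∀ (n : ℕ) (b : ℕ → Bool),
    (∀ i ≤ n, bump n b i = false) → AllT n b := by
  intro n
  induction n with
  | zero =>
    intro b h i hi
    interval_cases i
    have := h 0 le_rfl
    simp only [bump, Function.update_self] at this
    simpa using this
  | succ n ih =>
    intro b h
    by_cases hc : b (n+1) = true
    · have hA : AllT n (Function.update b (n+1) false) := by
        apply ih
        intro i hi
        have := h i (by omega)
        rwa [bump_succ_true hc] at this
      rw [allT_succ]
      refine ⟨fun i hi => ?_, hc⟩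
      have := hA i hi
      rwa [Function.update_of_ne (by omega : i ≠ n+1)] at this
    · exfalso
      have := h (n+1) le_rfl
      have hc' : b (n+1) = false := by simpa using hc
      rw [bump_succ_false hc'] at this
      simp at this

lemma bump_update_high : ∀ (n m : ℕ) (b : ℕ → Bool) (v : Bool), n < m →
    bump n (Function.update b m v) = Function.update (bump n b) m v := by
  intro n
  induction n with
  | zero =>
    intro m b v hm
    simp only [bump]
    rw [Function.update_of_ne (by omega : (0:ℕ) ≠ m)]
    rw [Function.update_comm (by omega : m ≠ 0)]
  | succ n ih =>
    intro m b v hm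
    have hne : (n+1 : ℕ) ≠ m := by omega
    have hval : Function.update b m v (n+1) = b (n+1) := Function.update_of_ne hne _ _
    by_cases hc : b (n+1) = true
    · rw [bump_succ_true (hval.trans hc), bump_succ_true hc,
        Function.update_comm hne.symm, ih _ _ _ (by omega)]
    · have hc' : b (n+1) = false := by simpa using hc
      rw [bump_succ_false (hval.trans hc'), bump_succ_false hc',
        Function.update_comm hne.symm]

lemma bump_inj : ∀ (n : ℕ) (b b' : ℕ → Bool), ¬ AllT n b → ¬ AllT n b' →
    (∀ i ≤ n, bump n b i = bump n b' i) → ∀ i ≤ n, b i = b' i := by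
  intro n
  induction n with
  | zero =>
    intro b b' hb hb' _ i hi
    interval_cases i
    have h1 : b 0 = false := by
      by_contra h; exact hb (fun i hi => by interval_cases i; simpa using h)
    have h2 : b' 0 = false := by
      by_contra h; exact hb' (fun i hi => by interval_cases i; simpa using h)
    rw [h1, h2]
  | succ n ih =>
    intro b b' hb hb' heq i hi
    by_cases hc : b (n+1) = true <;> by_cases hc' : b' (n+1) = true
    · -- both carry
      have hnb : ¬ AllT n b := fun h => hb (allT_succ.mpr ⟨h, hc⟩)
      have hnb' : ¬ AllT n b' := fun h => hb' (allT_succ.mpr ⟨h, hc'⟩)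
      have hnbu : ¬ AllT n (Function.update b (n+1) false) := by
        intro h; apply hnb; intro j hj
        have := h j hj; rwa [Function.update_of_ne (by omega : j ≠ n+1)] at this
      have hnbu' : ¬ AllT n (Function.update b' (n+1) false) := by
        intro h; apply hnb'; intro j hj
        have := h j hj; rwa [Function.update_of_ne (by omega : j ≠ n+1)] at this
      have key : ∀ j ≤ n, Function.update b (n+1) false j = Function.update b' (n+1) false j := by
        apply ih _ _ hnbu hnbu'
        intro j hj
        have := heq j (by omega)
        rwa [bump_succ_true hc, bump_succ_true hc'] at this
      rcases Nat.lt_or_ge i (n+1) with hlt | hge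
      · have := key i (by omega)
        rwa [Function.update_of_ne (by omega : i ≠ n+1),
             Function.update_of_ne (by omega : i ≠ n+1)] at this
      · have : i = n+1 := by omega
        subst this
        rw [hc, hc']
    · -- b carries, b' does not : contradiction via digit n+1
      exfalso
      have h1 := heq (n+1) le_rfl
      have hc'' : b' (n+1) = false := by simpa using hc'
      rw [bump_succ_true hc, bump_succ_false hc''] at h1
      rw [bump_high _ _ _ (by omega)] at h1
      simp at h1
    · exfalso
      have h1 := heq (n+1) le_rfl
      have hc'' : b (n+1) = false := by simpa using hc
      rw [bump_succ_true hc', bump_succ_false hc''] at h1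
      rw [bump_high _ _ _ (by omega)] at h1
      simp at h1
    · -- neither carries
      have hcb : b (n+1) = false := by simpa using hc
      have hcb' : b' (n+1) = false := by simpa using hc'
      rcases Nat.lt_or_ge i (n+1) with hlt | hge
      · have := heq i (by omega)
        simp only [bump, hcb, hcb', if_false, Bool.false_eq_true] at this
        rwa [Function.update_of_ne (by omega : i ≠ n+1),
             Function.update_of_ne (by omega : i ≠ n+1)] at this
      · have : i = n+1 := by omega
        subst this
        rw [hcb, hcb']

lemma allT_bump : ∀ (n : ℕ) (b : ℕ → Bool),
    AllT (n+1) (bump (n+1) b) ↔ (AllT n b ∧ b (n+1) = false) := by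
  intro n b
  by_cases hc : b (n+1) = true
  · rw [bump_succ_true hc]
    constructor
    · intro h
      exfalso
      have := h (n+1) le_rfl
      rw [bump_high _ _ _ (by omega)] at this
      simp at this
    · rintro ⟨_, h2⟩
      rw [hc] at h2
      exact absurd h2 (by simp)
  · have hc' : b (n+1) = false := by simpa using hc
    rw [bump_succ_false hc']
    constructor
    · intro h
      refine ⟨?_, hc'⟩
      intro i hi
      have := h i (by omega)
      rwa [Function.update_of_ne (by omega : i ≠ n+1)] at this
    · rintro ⟨h1, _⟩
      intro i hi
      rcases Nat.lt_or_ge i (n+1) with hlt | hge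
      · rw [Function.update_of_ne (by omega : i ≠ n+1)]
        exact h1 i (by omega)
      · have hi' : i = n+1 := by omega
        subst hi'
        simp

lemma bump_bump (n : ℕ) (b : ℕ → Bool) : bump (n+1) (bump (n+1) b) = bump n b := by
  by_cases hc : b (n+1) = true
  · have step1 : bump (n+1) b = bump n (Function.update b (n+1) false) :=
      bump_succ_true hc
    have hdig : bump (n+1) b (n+1) = false := by
      rw [step1, bump_high _ _ _ (by omega)]
      simp
    rw [bump_succ_false hdig, step1, ← bump_update_high _ _ _ _ (by omega),
      Function.update_idem]
    have : Function.update b (n+1) true = b := by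
      rw [← hc]; exact Function.update_eq_self _ _
    rw [this]
  · have hc' : b (n+1) = false := by simpa using hc
    have step1 : bump (n+1) b = Function.update b (n+1) true :=
      bump_succ_false hc'
    have hdig : bump (n+1) b (n+1) = true := by
      rw [step1]; simp
    rw [bump_succ_true hdig, step1, Function.update_idem]
    have : Function.update b (n+1) false = b := by
      rw [← hc']; exact Function.update_eq_self _ _
    rw [this]


/-! ### the maps ψ_n -/

def psi (n : ℕ) (x : Xc) : Xc :=
  (bump n x.1, if AllT n x.1 then sh x.2 else x.2)

lemma psi_fst (n : ℕ) (x : Xc) : (psi n x).1 = bump n x.1 := rfl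

lemma psi_snd_allT {n : ℕ} {x : Xc} (h : AllT n x.1) : (psi n x).2 = sh x.2 := by
  simp [psi, h]

lemma psi_snd_not_allT {n : ℕ} {x : Xc} (h : ¬ AllT n x.1) : (psi n x).2 = x.2 := by
  simp [psi, h]

lemma psi_chain (n : ℕ) : psi n = psi (n+1) ∘ psi (n+1) := by
  funext x
  apply Prod.ext
  · show bump n x.1 = bump (n+1) (bump (n+1) x.1)
    rw [bump_bump]
  · show (if AllT n x.1 then sh x.2 else x.2) = (psi (n+1) (psi (n+1) x)).2
    have hfst : (psi (n+1) x).1 = bump (n+1) x.1 := rfl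
    by_cases hA : AllT n x.1
    · by_cases hd : x.1 (n+1) = true
      · have h1 : AllT (n+1) x.1 := allT_succ.mpr ⟨hA, hd⟩
        have h2 : ¬ AllT (n+1) (psi (n+1) x).1 := by
          rw [hfst, allT_bump]
          rintro ⟨-, h⟩
          rw [hd] at h; exact absurd h (by simp)
        rw [psi_snd_not_allT h2, psi_snd_allT h1, if_pos hA]
      · have hd' : x.1 (n+1) = false := by simpa using hd
        have h1 : ¬ AllT (n+1) x.1 := by
          rw [allT_succ]; rintro ⟨-, h⟩; rw [hd'] at h; exact absurd h (by simp)
        have h2 : AllT (n+1) (psi (n+1) x).1 := by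
          rw [hfst, allT_bump]; exact ⟨hA, hd'⟩
        rw [psi_snd_allT h2, psi_snd_not_allT h1, if_pos hA]
    · have h1 : ¬ AllT (n+1) x.1 := by
        rw [allT_succ]; rintro ⟨h, -⟩; exact hA h
      have h2 : ¬ AllT (n+1) (psi (n+1) x).1 := by
        rw [hfst, allT_bump]; rintro ⟨h, -⟩; exact hA h
      rw [psi_snd_not_allT h2, psi_snd_not_allT h1, if_neg hA]

/-- the cylinder set determined by the first `n+1` digits of the first tape. -/
lemma isClopen_lowCyl (n : ℕ) (w : ℕ → Bool) :
    IsClopen {z : Xc | ∀ i ≤ n, z.1 i = w i} := by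
  have : {z : Xc | ∀ i ≤ n, z.1 i = w i}
      = ⋂ i ∈ Set.Iic n, (fun z : Xc => z.1 i) ⁻¹' {w i} := by
    ext z
    simp [Set.mem_iInter]
  rw [this]
  exact (Set.finite_Iic n).isClopen_biInter fun i _ =>
    (isClopen_discrete _).preimage ((continuous_apply i).comp continuous_fst)

lemma isClopen_sndCyl (v : Bool) : IsClopen {z : Xc | z.2 0 = v} := by
  have : {z : Xc | z.2 0 = v} = (fun z : Xc => z.2 0) ⁻¹' {v} := by ext z; simp
  rw [this]
  exact (isClopen_discrete _).preimage ((continuous_apply 0).comp continuous_snd)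

lemma isClopen_allT (n : ℕ) : IsClopen {x : Xc | AllT n x.1} := by
  have : {x : Xc | AllT n x.1} = {z : Xc | ∀ i ≤ n, z.1 i = (fun _ => true) i} := rfl
  rw [this]
  exact isClopen_lowCyl n _

lemma continuous_bump (n : ℕ) : Continuous fun b : ℕ → Bool => bump n b := by
  induction n with
  | zero =>
    have hnot : Continuous fun b : ℕ → Bool => !b 0 :=
      (continuous_of_discreteTopology (f := fun v : Bool => !v)).comp (continuous_apply 0)
    exact continuous_id.update 0 hnot
  | succ n ih =>
    have hcl : IsClopen {b : ℕ → Bool | b (n+1) = true} := by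
      have : {b : ℕ → Bool | b (n+1) = true}
          = (fun b : ℕ → Bool => b (n+1)) ⁻¹' {true} := by ext b; simp
      rw [this]
      exact (isClopen_discrete _).preimage (continuous_apply (n+1))
    have h1 : Continuous fun b : ℕ → Bool => bump n (Function.update b (n+1) false) :=
      ih.comp (continuous_id.update (n+1) continuous_const)
    have h2 : Continuous fun b : ℕ → Bool => Function.update b (n+1) true :=
      continuous_id.update (n+1) continuous_const
    have : (fun b : ℕ → Bool => bump (n+1) b)
        = fun b => if b (n+1) = true then bump n (Function.update b (n+1) false)
            else Function.update b (n+1) true := by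
      funext b
      by_cases h : b (n+1) = true
      · rw [bump_succ_true h, if_pos h]
      · rw [bump_succ_false (by simpa using h), if_neg h]
    rw [this]
    exact h1.if (by rw [hcl.frontier_eq]; simp) h2

lemma continuous_sh : Continuous fun c : ℕ → Bool => sh c :=
  continuous_pi fun i => continuous_apply (i+1)

lemma continuous_psi (n : ℕ) : Continuous (psi n) := by
  apply Continuous.prodMk
  · exact (continuous_bump n).comp continuous_fst
  · have hcl : IsClopen {x : Xc | AllT n x.1} := isClopen_allT n
    exact Continuous.if (by rw [hcl.frontier_eq]; simp)
      (continuous_sh.comp continuous_snd) continuous_snd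


/-! ### fibers of ψ_n -/

/-- the two preimages over a point whose low digits vanish -/
def xB (n : ℕ) (v : Bool) (z : Xc) : Xc :=
  (fun i => if i ≤ n then true else z.1 i,
   fun i => Nat.casesOn i v fun j => z.2 j)

lemma psi_xB (n : ℕ) (v : Bool) (z : Xc) (hz : ∀ i ≤ n, z.1 i = false) :
    psi n (xB n v z) = z := by
  have hA : AllT n (xB n v z).1 := by
    intro i hi
    simp [xB, hi]
  apply Prod.ext
  · rw [psi_fst]
    funext i
    rcases Nat.lt_or_ge n i with h | h
    · rw [bump_high _ _ _ h]
      show (if i ≤ n then true else z.1 i) = z.1 i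
      rw [if_neg (by omega : ¬ i ≤ n)]
    · rw [bump_allT _ _ hA i h, hz i h]
  · rw [psi_snd_allT hA]
    funext i
    rfl

lemma mem_fiber_B {n : ℕ} {z x : Xc} (hz : ∀ i ≤ n, z.1 i = false)
    (hx : psi n x = z) : x = xB n (x.2 0) z := by
  have hA : AllT n x.1 := by
    by_contra hN
    apply hN
    apply bump_false_allT n x.1
    intro i hi
    rw [← hx] at hz
    exact hz i hi
  apply Prod.ext
  · funext i
    rcases Nat.lt_or_ge n i with h | h
    · have : z.1 i = bump n x.1 i := by rw [← hx]; rfl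
      rw [bump_high _ _ _ h] at this
      show x.1 i = (if i ≤ n then true else z.1 i)
      rw [if_neg (by omega : ¬ i ≤ n), this]
    · simp [xB, h, hA i h]
  · funext i
    cases i with
    | zero => rfl
    | succ j =>
      have h2 : (psi n x).2 = sh x.2 := psi_snd_allT hA
      have : z.2 j = x.2 (j+1) := by rw [← hx, h2]; rfl
      simp [xB, this]

lemma fiber_B {n : ℕ} {z : Xc} (hz : ∀ i ≤ n, z.1 i = false) :
    {x : Xc | psi n x = z} = {xB n true z, xB n false z} := by
  ext x
  constructor
  · intro hx
    have := mem_fiber_B hz hx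
    cases h : x.2 0
    · right; rw [← h]; exact this
    · left; rw [← h]; exact this
  · rintro (rfl | rfl)
    · exact psi_xB n true z hz
    · exact psi_xB n false z hz

lemma xB_ne (n : ℕ) (z : Xc) : xB n true z ≠ xB n false z := by
  intro h
  have := congrArg (fun x : Xc => x.2 0) h
  simp [xB] at this

lemma fiber_A_unique {n : ℕ} {z x x' : Xc} (hz : ∃ i, i ≤ n ∧ z.1 i = true)
    (hx : psi n x = z) (hx' : psi n x' = z) : x = x' := by
  obtain ⟨i0, hi0, hi0t⟩ := hz
  have notA : ∀ y : Xc, psi n y = z → ¬ AllT n y.1 := by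
    intro y hy hA
    have := bump_allT n y.1 hA i0 hi0
    rw [← hy] at hi0t
    rw [psi_fst] at hi0t
    rw [this] at hi0t
    exact absurd hi0t (by simp)
  have hA := notA x hx
  have hA' := notA x' hx'
  have hfst : x.1 = x'.1 := by
    funext i
    rcases Nat.lt_or_ge n i with h | h
    · have e1 : bump n x.1 i = z.1 i := by rw [← hx]; rfl
      have e2 : bump n x'.1 i = z.1 i := by rw [← hx']; rfl
      rw [bump_high _ _ _ h] at e1
      rw [bump_high _ _ _ h] at e2
      rw [e1, e2]
    · refine bump_inj n x.1 x'.1 hA hA' ?_ i h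
      intro j hj
      have e1 : bump n x.1 j = z.1 j := by rw [← hx]; rfl
      have e2 : bump n x'.1 j = z.1 j := by rw [← hx']; rfl
      rw [e1, e2]
  apply Prod.ext hfst
  have e1 : (psi n x).2 = x.2 := psi_snd_not_allT hA
  have e2 : (psi n x').2 = x'.2 := psi_snd_not_allT hA'
  rw [← e1, ← e2, hx, hx']

lemma psi_surj (n : ℕ) : Function.Surjective (psi n) := by
  induction n with
  | zero =>
    intro z
    by_cases h : z.1 0 = false
    · exact ⟨xB 0 true z, psi_xB 0 true z (by intro i hi; interval_cases i; exact h)⟩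
    · have h' : z.1 0 = true := by simpa using h
      refine ⟨(Function.update z.1 0 false, z.2), ?_⟩
      have hA : ¬ AllT 0 (Function.update z.1 0 false) := by
        intro hA
        have := hA 0 le_rfl
        simp at this
      apply Prod.ext
      · rw [psi_fst]
        show bump 0 _ = z.1
        simp only [bump, Function.update_self]
        rw [Function.update_idem]
        show Function.update z.1 0 true = z.1
        rw [← h', Function.update_eq_self]
      · rw [psi_snd_not_allT hA]
  | succ n ih =>
    rw [psi_chain n] at ih
    exact ih.of_comp

lemma psi_not_inj (n : ℕ) : ¬ Function.Injective (psi n) := by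
  intro h
  have h1 : psi n (xB n true ((fun _ => false), (fun _ => false)))
      = psi n (xB n false ((fun _ => false), (fun _ => false))) := by
    rw [psi_xB _ _ _ (fun i _ => rfl), psi_xB _ _ _ (fun i _ => rfl)]
  exact xB_ne n _ (h h1)

lemma psi_fiber_finite (n : ℕ) (z : Xc) : {x : Xc | psi n x = z}.Finite := by
  by_cases hz : ∀ i ≤ n, z.1 i = false
  · rw [fiber_B hz]
    exact (Set.finite_singleton _).insert _
  · push_neg at hz
    obtain ⟨i0, hi0, hne⟩ := hz
    have hi0t : z.1 i0 = true := by simpa using hne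
    obtain ⟨x0, hx0⟩ := psi_surj n z
    apply Set.Finite.subset (Set.finite_singleton x0)
    intro x hx
    exact fiber_A_unique ⟨i0, hi0, hi0t⟩ hx hx0


/-! ### ψ_n is a local homeomorphism -/

lemma psi_injOn (n : ℕ) (x : Xc) :
    Set.InjOn (psi n) {y : Xc | (∀ i ≤ n, y.1 i = x.1 i) ∧ y.2 0 = x.2 0} := by
  rintro y ⟨hy1, hy2⟩ y' ⟨hy1', hy2'⟩ heq
  have hfst : y.1 = y'.1 := by
    funext i
    rcases Nat.lt_or_ge n i with h | h
    · have e1 : bump n y.1 i = bump n y'.1 i := by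
        have := congrArg Prod.fst heq
        rw [psi_fst, psi_fst] at this
        rw [this]
      rwa [bump_high _ _ _ h, bump_high _ _ _ h] at e1
    · rw [hy1 i h, hy1' i h]
  apply Prod.ext hfst
  by_cases hA : AllT n y.1
  · have hA' : AllT n y'.1 := by rwa [hfst] at hA
    have e : sh y.2 = sh y'.2 := by
      have := congrArg Prod.snd heq
      rwa [psi_snd_allT hA, psi_snd_allT hA'] at this
    funext i
    cases i with
    | zero => rw [hy2, hy2']
    | succ j => exact congrFun e j
  · have hA' : ¬ AllT n y'.1 := by rwa [hfst] at hA
    have := congrArg Prod.snd heq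
    rwa [psi_snd_not_allT hA, psi_snd_not_allT hA'] at this

lemma psi_image (n : ℕ) (x : Xc) :
    psi n '' {y : Xc | (∀ i ≤ n, y.1 i = x.1 i) ∧ y.2 0 = x.2 0}
      = if AllT n x.1 then {z : Xc | ∀ i ≤ n, z.1 i = false}
        else {z : Xc | (∀ i ≤ n, z.1 i = bump n x.1 i) ∧ z.2 0 = x.2 0} := by
  by_cases hA : AllT n x.1
  · rw [if_pos hA]
    ext z
    constructor
    · rintro ⟨y, ⟨hy1, hy2⟩, rfl⟩
      have hAy : AllT n y.1 := by
        intro i hi; rw [hy1 i hi]; exact hA i hi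
      intro i hi
      rw [psi_fst]
      exact bump_allT n y.1 hAy i hi
    · intro hz
      refine ⟨xB n (x.2 0) z, ⟨?_, rfl⟩, psi_xB n (x.2 0) z hz⟩
      intro i hi
      show (if i ≤ n then true else z.1 i) = x.1 i
      rw [if_pos hi, hA i hi]
  · rw [if_neg hA]
    ext z
    constructor
    · rintro ⟨y, ⟨hy1, hy2⟩, rfl⟩
      have hAy : ¬ AllT n y.1 := by
        intro h; exact hA ((allT_agree hy1).mp h)
      constructor
      · intro i hi
        rw [psi_fst]
        exact bump_agree n y.1 x.1 hy1 i hi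
      · rw [psi_snd_not_allT hAy, hy2]
    · rintro ⟨hz1, hz2⟩
      refine ⟨(fun i => if i ≤ n then x.1 i else z.1 i, z.2), ⟨?_, hz2⟩, ?_⟩
      · intro i hi
        show (if i ≤ n then x.1 i else z.1 i) = x.1 i
        rw [if_pos hi]
      · have hagree : ∀ i ≤ n, (fun i => if i ≤ n then x.1 i else z.1 i) i = x.1 i := by
          intro i hi; simp [hi]
        have hAy : ¬ AllT n (fun i => if i ≤ n then x.1 i else z.1 i) := by
          intro h; exact hA ((allT_agree hagree).mp h)
        apply Prod.ext
        · rw [psi_fst]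
          funext i
          rcases Nat.lt_or_ge n i with h | h
          · rw [bump_high _ _ _ h]
            show (if i ≤ n then x.1 i else z.1 i) = z.1 i
            rw [if_neg (by omega : ¬ i ≤ n)]
          · rw [bump_agree n _ x.1 hagree i h, hz1 i h]
        · rw [psi_snd_not_allT hAy]

lemma psi_isLocalHomeomorph (n : ℕ) : IsLocalHomeomorph (psi n) := by
  rw [isLocalHomeomorph_iff_isOpenEmbedding_restrict]
  intro x
  set U : Set Xc := {y : Xc | (∀ i ≤ n, y.1 i = x.1 i) ∧ y.2 0 = x.2 0} with hU
  have hUclopen : IsClopen U := by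
    have : U = {y : Xc | ∀ i ≤ n, y.1 i = x.1 i} ∩ {y : Xc | y.2 0 = x.2 0} := rfl
    rw [this]
    exact (isClopen_lowCyl n x.1).inter (isClopen_sndCyl (x.2 0))
  have hxU : x ∈ U := ⟨fun i _ => rfl, rfl⟩
  refine ⟨U, hUclopen.isOpen.mem_nhds hxU, ?_⟩
  haveI : CompactSpace U := isCompact_iff_compactSpace.mp hUclopen.isClosed.isCompact
  have hcont : Continuous (U.restrict (psi n)) :=
    (continuous_psi n).comp continuous_subtype_val
  have hinj : Function.Injective (U.restrict (psi n)) := (psi_injOn n x).injective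
  refine ⟨(hcont.isClosedEmbedding hinj).toIsEmbedding, ?_⟩
  rw [Set.range_restrict, psi_image n x]
  by_cases hA : AllT n x.1
  · rw [if_pos hA]
    exact (isClopen_lowCyl n (fun _ => false)).isOpen
  · rw [if_neg hA]
    have : {z : Xc | (∀ i ≤ n, z.1 i = bump n x.1 i) ∧ z.2 0 = x.2 0}
        = {z : Xc | ∀ i ≤ n, z.1 i = bump n x.1 i} ∩ {z : Xc | z.2 0 = x.2 0} := rfl
    rw [this]
    exact ((isClopen_lowCyl n _).inter (isClopen_sndCyl _)).isOpen


/-! ### the weights -/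

def w0 (n : ℕ) (x : Xc) : ℝ := if AllT n x.1 then 1/2 else 1

lemma w0_nonneg (n : ℕ) (x : Xc) : 0 ≤ w0 n x := by
  unfold w0; split <;> norm_num

lemma w0_continuous (n : ℕ) : Continuous (w0 n) := by
  have hcl : IsClopen {x : Xc | AllT n x.1} := isClopen_allT n
  exact Continuous.if (by rw [hcl.frontier_eq]; simp) continuous_const continuous_const

lemma fiberSum1 (n : ℕ) (z : Xc) : ∑ᶠ x ∈ {x : Xc | psi n x = z}, w0 n x = 1 := by
  by_cases hz : ∀ i ≤ n, z.1 i = false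
  · rw [fiber_B hz, finsum_mem_pair (xB_ne n z)]
    have hval : ∀ v : Bool, w0 n (xB n v z) = 1/2 := by
      intro v
      unfold w0
      rw [if_pos]
      intro i hi
      show (if i ≤ n then true else z.1 i) = true
      rw [if_pos hi]
    rw [hval true, hval false]
    norm_num
  · push_neg at hz
    obtain ⟨i0, hi0, hne⟩ := hz
    have hi0t : z.1 i0 = true := by simpa using hne
    obtain ⟨x0, hx0⟩ := psi_surj n z
    have hfib : {x : Xc | psi n x = z} = {x0} := by
      ext x
      constructor
      · intro hx
        exact fiber_A_unique ⟨i0, hi0, hi0t⟩ hx hx0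
      · rintro rfl; exact hx0
    rw [hfib, finsum_mem_singleton]
    unfold w0
    rw [if_neg]
    intro hA
    have := bump_allT n x0.1 hA i0 hi0
    rw [← hx0, psi_fst] at hi0t
    rw [this] at hi0t
    exact absurd hi0t (by simp)

lemma w0_split (n : ℕ) (x : Xc) :
    w0 n x = w0 (n+1) x * w0 (n+1) (psi (n+1) x) := by
  have hfst : (psi (n+1) x).1 = bump (n+1) x.1 := rfl
  unfold w0
  rw [hfst]
  by_cases hA : AllT n x.1
  · by_cases hd : x.1 (n+1) = true
    · rw [if_pos hA, if_pos (allT_succ.mpr ⟨hA, hd⟩), if_neg]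
      · norm_num
      · rw [allT_bump]
        rintro ⟨-, h⟩
        rw [hd] at h; exact absurd h (by simp)
    · have hd' : x.1 (n+1) = false := by simpa using hd
      rw [if_pos hA, if_neg, if_pos (allT_bump _ _ |>.mpr ⟨hA, hd'⟩)]
      · norm_num
      · rw [allT_succ]
        rintro ⟨-, h⟩
        rw [hd'] at h; exact absurd h (by simp)
  · rw [if_neg hA, if_neg, if_neg]
    · norm_num
    · rw [allT_bump]; rintro ⟨h, -⟩; exact hA h
    · rw [allT_succ]; rintro ⟨h, -⟩; exact hA h

def W (k n : ℕ) (x : Xc) : ℝ := ∏ i ∈ Finset.range k, w0 n ((psi n)^[i] x)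

lemma W_nonneg (k n : ℕ) (x : Xc) : 0 ≤ W k n x :=
  Finset.prod_nonneg fun i _ => w0_nonneg n _

lemma W_continuous (k n : ℕ) : Continuous (W k n) :=
  continuous_finset_prod _ fun i _ => (w0_continuous n).comp ((continuous_psi n).iterate i)

lemma W_succ' (k n : ℕ) (x : Xc) : W (k+1) n x = W k n (psi n x) * w0 n x := by
  unfold W
  rw [Finset.prod_range_succ']
  congr 1

lemma W_add (a b n : ℕ) (x : Xc) : W (a+b) n x = W a n x * W b n ((psi n)^[a] x) := by
  unfold W
  rw [Finset.prod_range_add]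
  congr 1
  apply Finset.prod_congr rfl
  intro i _
  have h : (psi n)^[a+i] x = (psi n)^[i] ((psi n)^[a] x) := by
    rw [Nat.add_comm, Function.iterate_add_apply]
  rw [h]

lemma prod_doubling (f : ℕ → ℝ) : ∀ k, ∏ i ∈ Finset.range (2*k), f i
    = ∏ j ∈ Finset.range k, (f (2*j) * f (2*j+1)) := by
  intro k
  induction k with
  | zero => simp
  | succ k ih =>
    have h2 : 2*(k+1) = (2*k+1)+1 := by ring
    rw [h2, Finset.prod_range_succ, Finset.prod_range_succ, Finset.prod_range_succ, ih,
      mul_assoc]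

lemma P_one (k n : ℕ) : (psi n)^[k] = (psi (n+1))^[2*k] := by
  rw [Function.iterate_mul]
  congr 1
  funext x
  rw [psi_chain n]
  simp [Function.iterate_succ, Function.comp]

lemma W_one (k n : ℕ) (x : Xc) : W k n x = W (2*k) (n+1) x := by
  unfold W
  rw [prod_doubling]
  apply Finset.prod_congr rfl
  intro j _
  have e1 : (psi (n+1))^[2*j] = (psi n)^[j] := (P_one j n).symm
  have e2 : (psi (n+1))^[2*j+1] x = psi (n+1) ((psi (n+1))^[2*j] x) :=
    Function.iterate_succ_apply' _ _ _
  rw [e2, e1, ← w0_split]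

lemma P_shift (k n : ℕ) : ∀ j, (psi n)^[k] = (psi (n+j))^[k * 2^j] := by
  intro j
  induction j with
  | zero => simp
  | succ j ih =>
    rw [ih, P_one]
    have : 2 * (k * 2^j) = k * 2^(j+1) := by ring
    rw [this]
    rfl

lemma W_shift (k n : ℕ) : ∀ j (x : Xc), W k n x = W (k * 2^j) (n+j) x := by
  intro j
  induction j with
  | zero => simp
  | succ j ih =>
    intro x
    rw [ih, W_one]
    have : 2 * (k * 2^j) = k * 2^(j+1) := by ring
    rw [this]
    rfl

lemma iter_fiber_finite (n : ℕ) : ∀ (k : ℕ) (z : Xc),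
    {x : Xc | (psi n)^[k] x = z}.Finite := by
  intro k
  induction k with
  | zero =>
    intro z
    apply Set.Finite.subset (Set.finite_singleton z)
    intro x hx
    simpa using hx
  | succ k ih =>
    intro z
    have : {x : Xc | (psi n)^[k+1] x = z}
        = ⋃ w ∈ {w : Xc | (psi n)^[k] w = z}, {x : Xc | psi n x = w} := by
      ext x
      simp [Function.iterate_succ_apply]
    rw [this]
    exact (ih z).biUnion fun w _ => psi_fiber_finite n w

lemma finsum_mem_const_mul {s : Set Xc} (hs : s.Finite) (c : ℝ) (f : Xc → ℝ) :
    ∑ᶠ x ∈ s, c * f x = c * ∑ᶠ x ∈ s, f x := by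
  rw [finsum_mem_eq_finite_toFinset_sum _ hs, finsum_mem_eq_finite_toFinset_sum _ hs,
    Finset.mul_sum]

lemma fiberSumW (n : ℕ) : ∀ (k : ℕ) (z : Xc),
    ∑ᶠ x ∈ {x : Xc | (psi n)^[k] x = z}, W k n x = 1 := by
  intro k
  induction k with
  | zero =>
    intro z
    have : {x : Xc | (psi n)^[0] x = z} = {z} := by ext x; simp
    rw [this, finsum_mem_singleton]
    simp [W]
  | succ k ih =>
    intro z
    have hfib : {x : Xc | (psi n)^[k+1] x = z}
        = ⋃ w ∈ {w : Xc | (psi n)^[k] w = z}, {x : Xc | psi n x = w} := by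
      ext x
      simp [Function.iterate_succ_apply]
    have hdisj : {w : Xc | (psi n)^[k] w = z}.PairwiseDisjoint
        (fun w => {x : Xc | psi n x = w}) := by
      intro a _ b _ hab
      refine Set.disjoint_left.mpr ?_
      intro x hxa hxb
      exact hab (hxa.symm.trans hxb)
    rw [hfib, finsum_mem_biUnion hdisj (iter_fiber_finite n k z)
      (fun w _ => psi_fiber_finite n w)]
    have hinner : ∀ w ∈ {w : Xc | (psi n)^[k] w = z},
        (∑ᶠ x ∈ {x : Xc | psi n x = w}, W (k+1) n x) = W k n w := by
      intro w hw
      have hcongr : ∀ x ∈ {x : Xc | psi n x = w}, W (k+1) n x = W k n w * w0 n x := by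
        intro x hx
        rw [W_succ', hx]
      rw [finsum_mem_congr rfl hcongr, finsum_mem_const_mul (psi_fiber_finite n w),
        fiberSum1, mul_one]
    rw [finsum_mem_congr rfl hinner]
    exact ih z


/-! ### the action of the positive dyadic rationals -/

def Kd (d : PosDyadic) : ℤ := (d.2.2).choose

def Nd (d : PosDyadic) : ℕ := (d.2.2).choose_spec.choose

lemma d_eq (d : PosDyadic) : d.1 = (Kd d : ℚ) / 2 ^ (Nd d) :=
  (d.2.2).choose_spec.choose_spec

lemma Kd_pos (d : PosDyadic) : 0 < Kd d := by
  have h := d.2.1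
  rw [d_eq d] at h
  have h2 : (0:ℚ) < 2 ^ (Nd d) := by positivity
  have : (0:ℚ) < (Kd d : ℚ) := by
    by_contra hK
    push_neg at hK
    have : (Kd d : ℚ) / 2 ^ (Nd d) ≤ 0 := div_nonpos_of_nonpos_of_nonneg hK (le_of_lt h2)
    linarith
  exact_mod_cast this

def kd (d : PosDyadic) : ℕ := (2 * Kd d).toNat

lemma kd_pos (d : PosDyadic) : 0 < kd d := by
  have := Kd_pos d
  unfold kd
  omega

lemma rep_eq (d : PosDyadic) : d.1 = (kd d : ℚ) / 2 ^ (Nd d + 1) := by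
  have hcast : ((kd d : ℕ) : ℚ) = 2 * (Kd d : ℚ) := by
    have h1 : (kd d : ℤ) = 2 * Kd d := Int.toNat_of_nonneg (by have := Kd_pos d; omega)
    exact_mod_cast congrArg (fun z : ℤ => (z : ℚ)) h1
  rw [hcast, d_eq d, pow_succ]
  have h2 : (2:ℚ) ^ (Nd d) ≠ 0 := by positivity
  field_simp

def Phi (d : PosDyadic) : Xc → Xc := (psi (Nd d))^[kd d]

def om (d : PosDyadic) : Xc → ℝ := W (kd d) (Nd d)

lemma up_eq (k m j : ℕ) : (k:ℚ)/2^(m+1) = ((k * 2^j : ℕ) : ℚ)/2^(m+j+1) := by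
  push_cast
  have : (2:ℚ)^(m+j+1) = 2^(m+1) * 2^j := by ring
  rw [this]
  rw [mul_div_mul_right _ _ (by positivity : ((2:ℚ)^j) ≠ 0)]

lemma rep_spec (d : PosDyadic) (k m : ℕ) (h : d.1 = (k:ℚ)/2^(m+1)) :
    Phi d = (psi m)^[k] ∧ om d = W k m := by
  have h0 : d.1 = (kd d : ℚ)/2^(Nd d + 1) := rep_eq d
  have hq : (kd d : ℚ) * 2^(m+1) = (k : ℚ) * 2^(Nd d + 1) := by
    have h1 : (kd d : ℚ)/2^(Nd d + 1) = (k:ℚ)/2^(m+1) := by rw [← h0, h]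
    rw [div_eq_div_iff (by positivity) (by positivity)] at h1
    exact h1
  have hn : kd d * 2^(m+1) = k * 2^(Nd d + 1) := by exact_mod_cast hq
  have hlvl : Nd d + (m+1) = m + (Nd d + 1) := by omega
  constructor
  · show (psi (Nd d))^[kd d] = (psi m)^[k]
    rw [P_shift (kd d) (Nd d) (m+1), P_shift k m (Nd d + 1), hn, hlvl]
  · show W (kd d) (Nd d) = W k m
    funext x
    rw [W_shift (kd d) (Nd d) (m+1) x, W_shift k m (Nd d + 1) x, hn, hlvl]

lemma common_rep (d e : PosDyadic) :
    ∃ (L a b : ℕ), 0 < a ∧ 0 < b ∧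
      d.1 = (a:ℚ)/2^(L+1) ∧ e.1 = (b:ℚ)/2^(L+1) ∧ (d+e).1 = ((a+b : ℕ):ℚ)/2^(L+1) := by
  refine ⟨Nd d + Nd e + 1, kd d * 2^(Nd e + 1), kd e * 2^(Nd d + 1), ?_, ?_, ?_, ?_, ?_⟩
  · have := kd_pos d; positivity
  · have := kd_pos e; positivity
  · rw [rep_eq d, up_eq (kd d) (Nd d) (Nd e + 1),
      (by omega : Nd d + (Nd e + 1) + 1 = Nd d + Nd e + 1 + 1)]
  · rw [rep_eq e, up_eq (kd e) (Nd e) (Nd d + 1),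
      (by omega : Nd e + (Nd d + 1) + 1 = Nd d + Nd e + 1 + 1)]
  · have hde : (d+e).1 = d.1 + e.1 := rfl
    rw [hde, rep_eq d, rep_eq e, up_eq (kd d) (Nd d) (Nd e + 1),
      up_eq (kd e) (Nd e) (Nd d + 1),
      (by omega : Nd e + (Nd d + 1) + 1 = Nd d + Nd e + 1 + 1),
      (by omega : Nd d + (Nd e + 1) + 1 = Nd d + Nd e + 1 + 1)]
    push_cast
    rw [← add_div]

lemma Phi_add (d e : PosDyadic) : Phi (d + e) = Phi d ∘ Phi e := by
  obtain ⟨L, a, b, _, _, hd, he, hde⟩ := common_rep d e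
  rw [(rep_spec d a L hd).1, (rep_spec e b L he).1, (rep_spec (d+e) (a+b) L hde).1,
    Function.iterate_add]

lemma om_add (d e : PosDyadic) (x : Xc) : om (d + e) x = om d x * om e (Phi d x) := by
  obtain ⟨L, a, b, _, _, hd, he, hde⟩ := common_rep d e
  rw [(rep_spec d a L hd).2, (rep_spec e b L he).2, (rep_spec (d+e) (a+b) L hde).2,
    (rep_spec d a L hd).1, W_add]

lemma iterate_isLocalHomeomorph (n : ℕ) : ∀ k, IsLocalHomeomorph ((psi n)^[k+1]) := by
  intro k
  induction k with
  | zero => simpa using psi_isLocalHomeomorph n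
  | succ k ih =>
    rw [Function.iterate_succ']
    exact (psi_isLocalHomeomorph n).comp ih

lemma Phi_isLocalHomeomorph (d : PosDyadic) : IsLocalHomeomorph (Phi d) := by
  obtain ⟨k, hk⟩ : ∃ k, kd d = k + 1 := ⟨kd d - 1, by have := kd_pos d; omega⟩
  show IsLocalHomeomorph ((psi (Nd d))^[kd d])
  rw [hk]
  exact iterate_isLocalHomeomorph (Nd d) k

lemma Phi_surjective (d : PosDyadic) : Function.Surjective (Phi d) :=
  (psi_surj (Nd d)).iterate (kd d)

lemma Phi_not_injective (d : PosDyadic) : ¬ Function.Injective (Phi d) := by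
  intro h
  obtain ⟨k, hk⟩ : ∃ k, kd d = k + 1 := ⟨kd d - 1, by have := kd_pos d; omega⟩
  have : Function.Injective ((psi (Nd d))^[k] ∘ psi (Nd d)) := by
    have e1 : (psi (Nd d))^[k] ∘ psi (Nd d) = (psi (Nd d))^[kd d] := by
      rw [hk]; exact (Function.iterate_succ _ _).symm
    rw [e1]
    exact h
  exact psi_not_inj (Nd d) this.of_comp

lemma om_nonneg (d : PosDyadic) (x : Xc) : 0 ≤ om d x := W_nonneg _ _ _

lemma om_continuous (d : PosDyadic) : Continuous (om d) := W_continuous _ _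

lemma om_fiber_sum (d : PosDyadic) (y : Xc) :
    ∑ᶠ x ∈ {x : Xc | Phi d x = y}, om d x = 1 :=
  fiberSumW (Nd d) (kd d) y

end DyadicCSLI

open DyadicCSLI in
/-- There is an action of the semigroup of positive dyadic rationals on a compact
metric space by local homeomorphisms which are surjective but not injective (hence
CSLI maps that are not homeomorphisms), and which admits a semigroup cocycle. -/
theorem exists_admissible_divisible_semigroup_action :
    ∃ (X : Type) (_ : MetricSpace X), CompactSpace X ∧
      ∃ Φ : PosDyadic → X → X,
        (∀ d e : PosDyadic, Φ (d + e) = Φ d ∘ Φ e) ∧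
        (∀ d : PosDyadic,
          IsLocalHomeomorph (Φ d) ∧ Function.Surjective (Φ d) ∧ ¬ Function.Injective (Φ d)) ∧
        ∃ ω : PosDyadic → X → ℝ,
          (∀ (d : PosDyadic) (x : X), 0 ≤ ω d x) ∧
          (∀ (d : PosDyadic) (y : X), ∑ᶠ x ∈ {x : X | Φ d x = y}, ω d x = 1) ∧
          (∀ d : PosDyadic, Continuous (ω d)) ∧
          (∀ (d e : PosDyadic) (x : X), ω (d + e) x = ω d x * ω e (Φ d x)) := by
  refine ⟨Xc, TopologicalSpace.metrizableSpaceMetric Xc, inferInstance, Phi,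
    Phi_add, fun d => ⟨Phi_isLocalHomeomorph d, Phi_surjective d, Phi_not_injective d⟩,
    om, om_nonneg, om_fiber_sum, om_continuous, om_add⟩
end
end
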